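/- arXiv:1904.07842 — 6 statements merged into one kernel-verified Lean document; each statement's English description precedes it below -/
import Mathlib

section
/- For 0 ≤ r ≤ (m−1)/2 and z = (z_0,...,z_r) ∈ F_{2^m}^{r+1} with z ≠ 0, the binary symmetric matrix P_{z,r} = A_{z_0} W + Σ_{i=1}^{r} [A_{z_i} W (R^i)^T + R^i W A_{z_i}^T] has rank at least m − 2r. -/
open Matrix BigOperators

open Polynomial

/-- The identification of `Fin m → ZMod 2` with `F`. -/
noncomputable def phiDG {F : Type} [Field F] [Algebra (ZMod 2) F] (m : ℕ) (α : F)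
    (v : Fin m → ZMod 2) : F := ∑ i, v i • α ^ (i : ℕ)

/-- The field element whose trace pairing with `y` computes the bilinear form. -/
noncomputable def cDG {F : Type} [Field F] (r m : ℕ) (z : Fin (r + 1) → F) (x : F) : F :=
  x * z 0 + ∑ i : Fin r,
    ((x * z i.succ) ^ 2 ^ (m - ((i : ℕ) + 1)) + x ^ 2 ^ ((i : ℕ) + 1) * z i.succ)

/-- The linearized polynomial whose roots contain the radical. -/
noncomputable def QDG {F : Type} [Field F] (r : ℕ) (z : Fin (r + 1) → F) : Polynomial F :=
  C (z 0 ^ 2 ^ r) * X ^ 2 ^ r + ∑ i : Fin r,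
    (C (z i.succ ^ 2 ^ (r - ((i : ℕ) + 1))) * X ^ 2 ^ (r - ((i : ℕ) + 1)) +
     C (z i.succ ^ 2 ^ r) * X ^ 2 ^ (r + ((i : ℕ) + 1)))

lemma zmod2_sq : ∀ c : ZMod 2, c ^ 2 = c := by decide

lemma trace_frob (F : Type) [Field F] [Algebra (ZMod 2) F] [CharP F 2] [Finite F] (a : F) :
    Algebra.trace (ZMod 2) F (a ^ 2) = Algebra.trace (ZMod 2) F a := by
  haveI : Fact (Nat.Prime 2) := ⟨Nat.prime_two⟩
  let L : F →ₗ[ZMod 2] F :=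
    { toFun := fun x => x ^ 2
      map_add' := fun x y => add_pow_char x y 2
      map_smul' := fun c x => by
        simp only [Algebra.smul_def, mul_pow, RingHom.id_apply, ← map_pow, zmod2_sq] }
  have hinj : Function.Injective L := fun x y h => frobenius_inj F 2 h
  have hbij : Function.Bijective L := ⟨hinj, Finite.injective_iff_surjective.mp hinj⟩
  let e : F ≃ₗ[ZMod 2] F := LinearEquiv.ofBijective L hbij
  have key : Algebra.lmul (ZMod 2) F (a ^ 2) = e.conj (Algebra.lmul (ZMod 2) F a) := by
    ext x
    have hs : (e.symm x) ^ 2 = x := e.apply_symm_apply x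
    rw [LinearEquiv.conj_apply]
    show a ^ 2 * x = e ((Algebra.lmul (ZMod 2) F a) (e.symm x))
    show a ^ 2 * x = (a * e.symm x) ^ 2
    rw [mul_pow, hs]
  rw [Algebra.trace_apply, Algebra.trace_apply, key, LinearMap.trace_conj']

lemma trace_frob_pow (F : Type) [Field F] [Algebra (ZMod 2) F] [CharP F 2] [Finite F]
    (k : ℕ) (a : F) :
    Algebra.trace (ZMod 2) F (a ^ 2 ^ k) = Algebra.trace (ZMod 2) F a := by
  induction k with
  | zero => simp
  | succ n ih => rw [pow_succ, pow_mul, trace_frob, ih]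

lemma QDG_eval {F : Type} [Field F] [CharP F 2] (r m : ℕ) (hrm : r ≤ m)
    (hpow : ∀ y : F, y ^ 2 ^ m = y) (z : Fin (r + 1) → F) (x : F) :
    (QDG r z).eval x = cDG r m z x ^ 2 ^ r := by
  haveI : Fact (Nat.Prime 2) := ⟨Nat.prime_two⟩
  haveI : ExpChar F 2 := ExpChar.prime Nat.prime_two
  rw [cDG, add_pow_char_pow, sum_pow_char_pow, QDG]
  simp only [eval_add, eval_mul, eval_pow, eval_C, eval_X, eval_finset_sum]
  congr 1
  · ring
  · refine Finset.sum_congr rfl fun i _ => ?_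
    have hk1 : (i : ℕ) + 1 ≤ r := i.2
    have hkm : (i : ℕ) + 1 ≤ m := le_trans hk1 hrm
    rw [add_pow_char_pow]
    have h1 : ((x * z i.succ) ^ 2 ^ (m - ((i : ℕ) + 1))) ^ 2 ^ r
        = (x * z i.succ) ^ 2 ^ (r - ((i : ℕ) + 1)) := by
      rw [← pow_mul, ← pow_add]
      have he : m - ((i : ℕ) + 1) + r = m + (r - ((i : ℕ) + 1)) := by omega
      rw [he, pow_add, pow_mul, hpow]
    have h2 : (x ^ 2 ^ ((i : ℕ) + 1) * z i.succ) ^ 2 ^ r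
        = z i.succ ^ 2 ^ r * x ^ 2 ^ (r + ((i : ℕ) + 1)) := by
      rw [mul_pow, ← pow_mul, ← pow_add, Nat.add_comm ((i : ℕ) + 1) r, mul_comm]
    rw [h1, h2, mul_pow]
    ring

lemma QDG_natDegree_le {F : Type} [Field F] (r : ℕ) (z : Fin (r + 1) → F) :
    (QDG r z).natDegree ≤ 2 ^ (2 * r) := by
  have hCX : ∀ (a : F) (n : ℕ), n ≤ 2 ^ (2 * r) → (C a * X ^ n : F[X]).natDegree ≤ 2 ^ (2 * r) :=
    fun a n hn => le_trans (natDegree_C_mul_le _ _) (by rw [natDegree_X_pow]; exact hn)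
  have hexp : ∀ n, n ≤ 2 * r → 2 ^ n ≤ 2 ^ (2 * r) :=
    fun n hn => Nat.pow_le_pow_right (by norm_num) hn
  rw [QDG]
  refine le_trans (natDegree_add_le _ _) (max_le (hCX _ _ (hexp _ (by omega))) ?_)
  refine natDegree_sum_le_of_forall_le _ _ fun i _ => ?_
  have hk1 : (i : ℕ) + 1 ≤ r := i.2
  refine le_trans (natDegree_add_le _ _) (max_le ?_ ?_)
  · exact hCX _ _ (hexp _ (by omega))
  · exact hCX _ _ (hexp _ (by omega))

lemma QDG_ne_zero {F : Type} [Field F] (r : ℕ) (z : Fin (r + 1) → F) (hz : z ≠ 0) :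
    QDG r z ≠ 0 := by
  obtain ⟨j, hj⟩ := Function.ne_iff.mp hz
  have p2ne : ∀ {a b : ℕ}, a ≠ b → ((2 : ℕ) ^ a = 2 ^ b → False) :=
    fun hab h => hab (Nat.pow_right_injective (le_refl 2) h)
  have hco : ∀ n, (QDG r z).coeff n =
      (if n = 2 ^ r then z 0 ^ 2 ^ r else 0) + ∑ i : Fin r,
        ((if n = 2 ^ (r - ((i : ℕ) + 1)) then z i.succ ^ 2 ^ (r - ((i : ℕ) + 1)) else 0) +
         (if n = 2 ^ (r + ((i : ℕ) + 1)) then z i.succ ^ 2 ^ r else 0)) := by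
    intro n
    rw [QDG]
    simp only [coeff_add, coeff_C_mul, coeff_X_pow, finset_sum_coeff, mul_ite, mul_one, mul_zero]
  intro h0
  rcases Fin.eq_zero_or_eq_succ j with hj0 | ⟨i0, rfl⟩
  · subst hj0
    have := hco (2 ^ r)
    rw [h0, coeff_zero, if_pos rfl] at this
    rw [Finset.sum_eq_zero (fun i _ => ?_)] at this
    · rw [add_zero] at this
      exact pow_ne_zero _ hj this.symm
    · have hk1 : (i : ℕ) + 1 ≤ r := i.2
      rw [if_neg (fun h => p2ne (by omega) h), if_neg (fun h => p2ne (by omega) h),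
        add_zero]
  · have := hco (2 ^ (r + ((i0 : ℕ) + 1)))
    have hk0 : (i0 : ℕ) + 1 ≤ r := i0.2
    rw [h0, coeff_zero, if_neg (fun h => p2ne (by omega) h), zero_add] at this
    rw [Finset.sum_eq_single i0] at this
    · rw [if_neg (fun h => p2ne (by omega) h), zero_add, if_pos rfl] at this
      exact pow_ne_zero _ hj this.symm
    · intro i _ hii
      have hk1 : (i : ℕ) + 1 ≤ r := i.2
      have hne : (i : ℕ) ≠ (i0 : ℕ) := fun h => hii (Fin.ext h)
      rw [if_neg (fun h => p2ne (by omega) h), if_neg (fun h => p2ne (by omega) h), add_zero]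
    · intro h; exact absurd (Finset.mem_univ i0) h

/-- For `0 ≤ r ≤ (m-1)/2` and nonzero `z ∈ F_{2^m}^{r+1}`, the Delsarte–Goethals
matrix `P_{z,r} = A_{z₀} W + Σ_{i=1}^r [A_{z_i} W (Rⁱ)ᵀ + Rⁱ W A_{z_i}ᵀ]`
has rank at least `m - 2r`. -/
theorem delsarteGoethals_rank_lower_bound
    (m r : ℕ) (hm : 0 < m) (hr : r ≤ (m - 1) / 2)
    (F : Type) [Field F] [Algebra (ZMod 2) F]
    (α : F) (bas : Module.Basis (Fin m) (ZMod 2) F)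
    (hbas : ∀ i : Fin m, bas i = α ^ (i : ℕ))
    (hα : ∀ x : F, x ≠ 0 → ∃ k : ℕ, x = α ^ k)
    (W : Matrix (Fin m) (Fin m) (ZMod 2))
    (hW : ∀ i j, W i j = Algebra.trace (ZMod 2) F (α ^ (i : ℕ) * α ^ (j : ℕ)))
    (R : Matrix (Fin m) (Fin m) (ZMod 2))
    (hR : ∀ v : Fin m → ZMod 2,
      (∑ i, Matrix.vecMul v R i • α ^ (i : ℕ)) = (∑ i, v i • α ^ (i : ℕ)) ^ 2)
    (A : F → Matrix (Fin m) (Fin m) (ZMod 2))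
    (hA : ∀ (w : F) (v : Fin m → ZMod 2),
      (∑ i, Matrix.vecMul v (A w) i • α ^ (i : ℕ)) = (∑ i, v i • α ^ (i : ℕ)) * w)
    (z : Fin (r + 1) → F) (hz : z ≠ 0) :
    m - 2 * r ≤
      (A (z 0) * W + ∑ i : Fin r,
        (A (z i.succ) * W * (R ^ ((i : ℕ) + 1))ᵀ +
          R ^ ((i : ℕ) + 1) * W * (A (z i.succ))ᵀ)).rank := by
  classical
  haveI : Fact (Nat.Prime 2) := ⟨Nat.prime_two⟩
  haveI : FiniteDimensional (ZMod 2) F := Module.Finite.of_basis bas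
  haveI : Finite F := Finite.of_equiv _ bas.equivFun.symm.toEquiv
  haveI : Fintype F := Fintype.ofFinite F
  haveI : CharP F 2 := charP_of_injective_algebraMap (algebraMap (ZMod 2) F).injective 2
  haveI : ExpChar F 2 := ExpChar.prime Nat.prime_two
  haveI := Algebra.IsAlgebraic.of_finite (ZMod 2) F
  have h2r : 2 * r < m := by omega
  set P := A (z 0) * W + ∑ i : Fin r,
      (A (z i.succ) * W * (R ^ ((i : ℕ) + 1))ᵀ +
        R ^ ((i : ℕ) + 1) * W * (A (z i.succ))ᵀ) with hP
  -- phi basics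
  have hφsymm : ∀ v, phiDG m α v = bas.equivFun.symm v := by
    intro v
    rw [Module.Basis.equivFun_symm_apply, phiDG]
    exact Finset.sum_congr rfl fun i _ => by rw [hbas]
  have hφinj : Function.Injective (phiDG m α) := by
    intro v w h; rw [hφsymm, hφsymm] at h; exact bas.equivFun.symm.injective h
  have hφsurj : Function.Surjective (phiDG m α) := fun y =>
    ⟨bas.equivFun y, by rw [hφsymm]; exact bas.equivFun.symm_apply_apply y⟩
  have hcard : Fintype.card F = 2 ^ m := by
    rw [Module.card_eq_pow_finrank (K := ZMod 2) (V := F), ZMod.card,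
      Module.finrank_eq_card_basis bas, Fintype.card_fin]
  have hpow : ∀ x : F, x ^ 2 ^ m = x := fun x => by
    rw [← hcard]; exact FiniteField.pow_card x
  -- W and trace
  have Wdot : ∀ v u : Fin m → ZMod 2,
      (v ᵥ* W) ⬝ᵥ u = Algebra.trace (ZMod 2) F (phiDG m α v * phiDG m α u) := by
    intro v u
    have expand : phiDG m α v * phiDG m α u
        = ∑ i : Fin m, ∑ j : Fin m, (v i * u j) • (α ^ (i : ℕ) * α ^ (j : ℕ)) := by
      rw [phiDG, phiDG, Finset.sum_mul_sum]
      exact Finset.sum_congr rfl fun i _ => Finset.sum_congr rfl fun j _ =>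
        smul_mul_smul_comm _ _ _ _
    rw [expand]
    simp only [map_sum, _root_.map_smul, smul_eq_mul]
    simp only [dotProduct, vecMul, hW, Finset.sum_mul]
    rw [Finset.sum_comm]
    exact Finset.sum_congr rfl fun i _ => Finset.sum_congr rfl fun j _ => by ring
  have hAφ : ∀ (w : F) (v : Fin m → ZMod 2),
      phiDG m α (v ᵥ* A w) = phiDG m α v * w := fun w v => hA w v
  have hRk : ∀ (k : ℕ) (v : Fin m → ZMod 2),
      phiDG m α (v ᵥ* (R ^ k)) = (phiDG m α v) ^ 2 ^ k := by
    intro k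
    induction k with
    | zero => intro v; simp [phiDG]
    | succ n ih =>
      intro v
      rw [pow_succ, ← Matrix.vecMul_vecMul]
      have : phiDG m α ((v ᵥ* R ^ n) ᵥ* R) = (phiDG m α (v ᵥ* R ^ n)) ^ 2 := hR _
      rw [this, ih, ← pow_mul, ← pow_succ]
  have htr : ∀ (a u : Fin m → ZMod 2) (M : Matrix (Fin m) (Fin m) (ZMod 2)),
      (a ᵥ* Mᵀ) ⬝ᵥ u = a ⬝ᵥ (u ᵥ* M) := by
    intro a u M
    rw [vecMul_transpose, dotProduct_comm, dotProduct_mulVec, dotProduct_comm]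
  have vecMulSum : ∀ (v : Fin m → ZMod 2) (f : Fin r → Matrix (Fin m) (Fin m) (ZMod 2)),
      v ᵥ* (∑ i, f i) = ∑ i, v ᵥ* f i := by
    intro v f
    ext j
    simp only [vecMul, dotProduct, Matrix.sum_apply, Finset.sum_apply, Finset.mul_sum]
    exact Finset.sum_comm
  have sumDot : ∀ (f : Fin r → (Fin m → ZMod 2)) (u : Fin m → ZMod 2),
      (∑ i, f i) ⬝ᵥ u = ∑ i, f i ⬝ᵥ u := by
    intro f u
    simp only [dotProduct, Finset.sum_apply, Finset.sum_mul]
    exact Finset.sum_comm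
  have Pdot : ∀ v u : Fin m → ZMod 2,
      (v ᵥ* P) ⬝ᵥ u =
      Algebra.trace (ZMod 2) F (phiDG m α v * z 0 * phiDG m α u) +
      ∑ i : Fin r,
        (Algebra.trace (ZMod 2) F
            (phiDG m α v * z i.succ * (phiDG m α u) ^ 2 ^ ((i : ℕ) + 1)) +
         Algebra.trace (ZMod 2) F
            ((phiDG m α v) ^ 2 ^ ((i : ℕ) + 1) * (phiDG m α u * z i.succ))) := by
    intro v u
    rw [hP, Matrix.vecMul_add, add_dotProduct, vecMulSum, sumDot]
    congr 1
    · rw [← Matrix.vecMul_vecMul, Wdot, hAφ]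
    · refine Finset.sum_congr rfl fun i _ => ?_
      rw [Matrix.vecMul_add, add_dotProduct]
      congr 1
      · rw [← Matrix.vecMul_vecMul, htr, ← Matrix.vecMul_vecMul, Wdot, hAφ, hRk]
      · rw [← Matrix.vecMul_vecMul, htr, ← Matrix.vecMul_vecMul, Wdot, hAφ, hRk]
  -- trace shift
  have tshift : ∀ (k : ℕ), k ≤ m → ∀ a y : F,
      Algebra.trace (ZMod 2) F (a ^ 2 ^ (m - k) * y) =
      Algebra.trace (ZMod 2) F (a * y ^ 2 ^ k) := by
    intro k hk a y
    rw [← trace_frob_pow F k (a ^ 2 ^ (m - k) * y)]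
    congr 1
    rw [mul_pow, ← pow_mul, ← pow_add, Nat.sub_add_cancel hk, hpow]
  -- kernel elements are roots
  set K := LinearMap.ker (Matrix.mulVecLin Pᵀ) with hK
  have hroot : ∀ v : Fin m → ZMod 2, v ∈ K → (QDG r z).IsRoot (phiDG m α v) := by
    intro v hv
    have hv0 : v ᵥ* P = 0 := by
      rw [hK, LinearMap.mem_ker, Matrix.mulVecLin_apply, Matrix.mulVec_transpose] at hv
      exact hv
    have hcx : cDG r m z (phiDG m α v) = 0 := by
      apply (traceForm_nondegenerate (ZMod 2) F).1
      intro y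
      obtain ⟨u, rfl⟩ := hφsurj y
      rw [Algebra.traceForm_apply]
      have h0 : (v ᵥ* P) ⬝ᵥ u = 0 := by rw [hv0]; exact zero_dotProduct u
      rw [Pdot v u] at h0
      rw [cDG, add_mul, Finset.sum_mul, map_add, map_sum, ← h0]
      congr 1
      refine Finset.sum_congr rfl fun i _ => ?_
      have hkm : (i : ℕ) + 1 ≤ m := by have := i.2; omega
      rw [add_mul, map_add]
      congr 1
      · exact tshift ((i : ℕ) + 1) hkm (phiDG m α v * z i.succ) (phiDG m α u)
      · congr 1; ring
    rw [Polynomial.IsRoot, QDG_eval r m (by omega) hpow z, hcx]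
    exact zero_pow (by positivity)
  -- counting
  haveI : Fintype ↥K := Fintype.ofFinite _
  have hQne : QDG r z ≠ 0 := QDG_ne_zero r z hz
  have hg : ∀ v : ↥K, phiDG m α v.1 ∈ (QDG r z).roots.toFinset := fun v => by
    rw [Multiset.mem_toFinset, Polynomial.mem_roots hQne]
    exact hroot v.1 v.2
  have hcardle : Fintype.card ↥K ≤ 2 ^ (2 * r) := by
    have hinj2 : Function.Injective
        (fun v : ↥K => (⟨phiDG m α v.1, hg v⟩ :
          {a // a ∈ (QDG r z).roots.toFinset})) := by
      intro v w h
      exact Subtype.ext (hφinj (congrArg Subtype.val h))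
    calc Fintype.card ↥K
        ≤ Fintype.card {a // a ∈ (QDG r z).roots.toFinset} :=
          Fintype.card_le_of_injective _ hinj2
      _ = (QDG r z).roots.toFinset.card := Fintype.card_coe _
      _ ≤ Multiset.card (QDG r z).roots := Multiset.toFinset_card_le _
      _ ≤ (QDG r z).natDegree := Polynomial.card_roots' _
      _ ≤ 2 ^ (2 * r) := QDG_natDegree_le r z
  have hfr : Module.finrank (ZMod 2) ↥K ≤ 2 * r := by
    have h2 : (2 : ℕ) ^ Module.finrank (ZMod 2) ↥K ≤ 2 ^ (2 * r) := by
      have := Module.card_eq_pow_finrank (K := ZMod 2) (V := ↥K)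
      rw [ZMod.card] at this
      rw [← this]
      exact hcardle
    exact (Nat.pow_le_pow_iff_right (by norm_num)).mp h2
  -- rank-nullity
  have hrn := LinearMap.finrank_range_add_finrank_ker (Matrix.mulVecLin Pᵀ)
  rw [Module.finrank_pi, Fintype.card_fin] at hrn
  have hrank : (Pᵀ).rank = Module.finrank (ZMod 2) (LinearMap.range (Matrix.mulVecLin Pᵀ)) :=
    rfl
  have ht := Matrix.rank_transpose P
  have hsum : P.rank + Module.finrank (ZMod 2) ↥K = m := by
    rw [← ht, hrank, hK]
    exact hrn
  omega
end

section
/- The Kerdock set P_K(m) = {A_z W : z ∈ F_{2^m}} is an m-dimensional F_2-vector space of symmetric m×m binary matrices in which every nonzero element is non-singular; in particular, for distinct z, z' ∈ F_{2^m}, the matrix A_z W + A_{z'} W is invertible. -/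
open Matrix BigOperators

/-- The Kerdock set `P_K(m) = {A_z W : z ∈ F_{2^m}}` is an `m`-dimensional
`F_2`-vector space of symmetric matrices whose nonzero elements are
non-singular; in particular sums of distinct elements are invertible. -/
theorem kerdock_set_properties
    (m : ℕ) (hm : 0 < m) (F : Type) [Field F] [Algebra (ZMod 2) F]
    (α : F) (bas : Module.Basis (Fin m) (ZMod 2) F)
    (hbas : ∀ i : Fin m, bas i = α ^ (i : ℕ))
    (hα : ∀ x : F, x ≠ 0 → ∃ k : ℕ, x = α ^ k)
    (W : Matrix (Fin m) (Fin m) (ZMod 2))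
    (hW : ∀ i j, W i j = Algebra.trace (ZMod 2) F (α ^ (i : ℕ) * α ^ (j : ℕ)))
    (A : F → Matrix (Fin m) (Fin m) (ZMod 2))
    (hA : ∀ (w : F) (v : Fin m → ZMod 2),
      (∑ i, Matrix.vecMul v (A w) i • α ^ (i : ℕ)) = (∑ i, v i • α ^ (i : ℕ)) * w) :
    (∃ V : Submodule (ZMod 2) (Matrix (Fin m) (Fin m) (ZMod 2)),
        (V : Set (Matrix (Fin m) (Fin m) (ZMod 2))) = {M | ∃ z : F, M = A z * W} ∧
        Module.finrank (ZMod 2) V = m) ∧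
    (∀ z : F, (A z * W).IsSymm) ∧
    (∀ M : Matrix (Fin m) (Fin m) (ZMod 2),
        (∃ z : F, M = A z * W) → M ≠ 0 → IsUnit M) ∧
    (∀ z z' : F, z ≠ z' → IsUnit (A z * W + A z' * W)) := by
  haveI : FiniteDimensional (ZMod 2) F := bas.finiteDimensional_of_finite
  haveI : CharP F 2 :=
    charP_of_injective_algebraMap (algebraMap (ZMod 2) F).injective 2
  haveI : Nonempty (Fin m) := ⟨⟨0, hm⟩⟩
  -- rows of `A z`
  have key : ∀ (z : F) (i : Fin m), (∑ k, A z i k • bas k) = α ^ (i : ℕ) * z := by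
    intro z i
    have h := hA z (Pi.single i 1)
    rw [Matrix.single_one_vecMul] at h
    have hs : (∑ j, (Pi.single i 1 : Fin m → ZMod 2) j • α ^ (j : ℕ)) = α ^ (i : ℕ) := by
      rw [Finset.sum_eq_single i]
      · simp
      · intro b _ hb; simp [Pi.single_eq_of_ne hb]
      · simp
    simp_rw [hbas]
    rw [← hs]; exact h
  have hrow : ∀ (z : F) (i k : Fin m), A z i k = bas.repr (α ^ (i : ℕ) * z) k := by
    intro z i k
    have h := congrFun (bas.repr_sum_self (fun k' => A z i k')) k
    rw [key z i] at h
    exact h.symm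
  -- entry formula
  have hAW : ∀ (z : F) (i j : Fin m), (A z * W) i j =
      Algebra.trace (ZMod 2) F (α ^ (i : ℕ) * z * α ^ (j : ℕ)) := by
    intro z i j
    have hx : α ^ (i : ℕ) * z = ∑ k, bas.repr (α ^ (i : ℕ) * z) k • α ^ (k : ℕ) := by
      conv_lhs => rw [← bas.sum_repr (α ^ (i : ℕ) * z)]
      exact Finset.sum_congr rfl fun k _ => by rw [hbas]
    conv_rhs => rw [hx, Finset.sum_mul, map_sum]
    rw [Matrix.mul_apply]
    refine Finset.sum_congr rfl fun k _ => ?_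
    rw [smul_mul_assoc, _root_.map_smul, smul_eq_mul, hW, hrow]
  -- nonzero z gives invertible matrix
  have hnd : ∀ z : F, z ≠ 0 → IsUnit (A z * W) := by
    intro z hz
    set B : LinearMap.BilinForm (ZMod 2) F :=
      (Algebra.traceForm (ZMod 2) F) ∘ₗ (LinearMap.mulLeft (ZMod 2) z) with hB
    have hmat : A z * W = LinearMap.BilinForm.toMatrix bas B := by
      ext i j
      rw [LinearMap.BilinForm.toMatrix_apply, hAW, hB]
      simp only [LinearMap.comp_apply, LinearMap.mulLeft_apply, Algebra.traceForm_apply, hbas]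
      congr 1; ring
    have hBnd : B.Nondegenerate := by
      refine LinearMap.BilinForm.Nondegenerate.ofSeparatingLeft ?_
      intro x hx
      have h0 : z * x = 0 := (traceForm_nondegenerate (ZMod 2) F).1 (z * x) hx
      exact (mul_eq_zero.mp h0).resolve_left hz
    have := hBnd.toMatrix bas
    rw [Matrix.nondegenerate_iff_det_ne_zero] at this
    rw [hmat, Matrix.isUnit_iff_isUnit_det]
    exact isUnit_iff_ne_zero.mpr this
  -- additivity / linearity of z ↦ A z * W
  have hadd : ∀ z z' : F, A (z + z') * W = A z * W + A z' * W := by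
    intro z z'
    ext i j
    rw [Matrix.add_apply, hAW, hAW, hAW, ← map_add]
    congr 1; ring
  have hsmul : ∀ (c : ZMod 2) (z : F), A (c • z) * W = c • (A z * W) := by
    intro c z
    ext i j
    rw [Matrix.smul_apply, hAW, hAW, mul_smul_comm, smul_mul_assoc, _root_.map_smul]
  set L : F →ₗ[ZMod 2] Matrix (Fin m) (Fin m) (ZMod 2) :=
    { toFun := fun z => A z * W, map_add' := hadd, map_smul' := hsmul } with hL
  have hLapp : ∀ z : F, L z = A z * W := fun z => rfl
  have hinj : Function.Injective L := by
    intro z z' h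
    by_contra hne
    have hz : z - z' ≠ 0 := sub_ne_zero.mpr hne
    have h0 : L (z - z') = 0 := by rw [map_sub, h, sub_self]
    rw [hLapp] at h0
    exact (hnd (z - z') hz).ne_zero h0
  refine ⟨⟨LinearMap.range L, ?_, ?_⟩, ?_, ?_, ?_⟩
  · ext M
    simp only [SetLike.mem_coe, LinearMap.mem_range, Set.mem_setOf_eq]
    constructor
    · rintro ⟨z, rfl⟩; exact ⟨z, (hLapp z).symm⟩
    · rintro ⟨z, rfl⟩; exact ⟨z, hLapp z⟩
  · rw [LinearMap.finrank_range_of_inj hinj, Module.finrank_eq_card_basis bas,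
      Fintype.card_fin]
  · intro z
    ext i j
    rw [Matrix.transpose_apply, hAW, hAW]
    congr 1; ring
  · rintro M ⟨z, rfl⟩ hM
    rcases eq_or_ne z 0 with rfl | hz
    · exact absurd (by ext i j; simp [hAW]) hM
    · exact hnd z hz
  · intro z z' hne
    rw [← hadd]
    apply hnd
    intro h0
    apply hne
    have h1 : z = -z' := eq_neg_of_add_eq_zero_left h0
    rw [h1, CharTwo.neg_eq]
end

section
/- Let P be a binary symmetric m×m matrix and w ∈ F_2^m. The vector v = (i^{x P x^T + 2 w x^T})_{x ∈ F_2^m} ∈ C^{2^m} (entries indexed by x, exponents computed as integers mod 4) is a common eigenvector of all the 2^m commuting Pauli operators E(a, aP), a ∈ F_2^m, with eigenvalues ±1. -/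
open Matrix BigOperators

/-- The m-qubit Pauli operator `D(a,b) = X^{a_1}Z^{b_1} ⊗ ⋯ ⊗ X^{a_m}Z^{b_m}`. -/
noncomputable def PauliD (m : ℕ) (a b : Fin m → ZMod 2) :
    Matrix (Fin m → ZMod 2) (Fin m → ZMod 2) ℂ :=
  Matrix.of fun y x =>
    ∏ i, (if y i = x i + a i then ((-1 : ℂ)) ^ ((b i).val * (x i).val) else 0)

/-- The Hermitian Pauli operator `E(a,b) = i^{a·bᵀ} D(a,b)`. -/
noncomputable def PauliE (m : ℕ) (a b : Fin m → ZMod 2) :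
    Matrix (Fin m → ZMod 2) (Fin m → ZMod 2) ℂ :=
  (Complex.I ^ (∑ i, (a i).val * (b i).val)) • PauliD m a b

lemma bit2 : ∀ u : ZMod 2, ((u.val : ℕ) : ZMod 2) = u := by decide

lemma B1 : ∀ u v : ZMod 2, (((u+v).val : ℕ) : ZMod 4)
    = (u.val : ZMod 4) + (v.val : ZMod 4) + 2*((u.val : ZMod 4) * (v.val : ZMod 4)) := by decide

lemma I_pow_congr {p q : ℕ} (h : (p : ZMod 4) = (q : ZMod 4)) :
    Complex.I ^ p = Complex.I ^ q := by
  have key : ∀ n : ℕ, Complex.I ^ n = Complex.I ^ (n % 4) := by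
    intro n
    conv_lhs => rw [← Nat.div_add_mod n 4]
    rw [pow_add, pow_mul, Complex.I_pow_four, one_pow, one_mul]
  rw [key p, key q, (ZMod.natCast_eq_natCast_iff p q 4).mp h]

lemma neg_one_pow_congr' {p q : ℕ} (h : (p : ZMod 2) = (q : ZMod 2)) :
    ((-1 : ℂ)) ^ p = (-1 : ℂ) ^ q := by
  have key : ∀ n : ℕ, ((-1:ℂ)) ^ n = (-1:ℂ) ^ (n % 2) := by
    intro n
    conv_lhs => rw [← Nat.div_add_mod n 2]
    rw [pow_add, pow_mul, neg_one_sq, one_pow, one_mul]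
  rw [key p, key q, (ZMod.natCast_eq_natCast_iff p q 2).mp h]

lemma two_mul_cast (n : ℕ) : (2 * (n : ZMod 4)) = 2 * ((n % 2 : ℕ) : ZMod 4) := by
  conv_lhs => rw [← Nat.div_add_mod n 2]
  push_cast
  have h4 : (4 : ZMod 4) = 0 := by decide
  linear_combination ((n / 2 : ℕ) : ZMod 4) * h4

lemma add_self_vec {m : ℕ} (u a : Fin m → ZMod 2) : u + a + a = u := by
  funext i
  have : ∀ s t : ZMod 2, s + t + t = s := by decide
  exact this (u i) (a i)

lemma PauliD_eq (m : ℕ) (a b : Fin m → ZMod 2) :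
    PauliD m a b = Matrix.of fun y x =>
      if y = x + a then ((-1:ℂ)) ^ (∑ i, (b i).val * (x i).val) else 0 := by
  ext y x
  simp only [PauliD, Matrix.of_apply]
  by_cases h : y = x + a
  · rw [if_pos h, Finset.prod_congr rfl (fun i _ => if_pos (by rw [h]; rfl)),
      Finset.prod_pow_eq_pow_sum]
  · rw [if_neg h]
    have : ∃ i, y i ≠ x i + a i := by
      by_contra hc
      push_neg at hc
      exact h (funext hc)
    obtain ⟨i, hi⟩ := this
    exact Finset.prod_eq_zero (Finset.mem_univ i) (if_neg hi)

lemma D_mul_D (m : ℕ) (a b a' b' : Fin m → ZMod 2) :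
    PauliD m a b * PauliD m a' b' = Matrix.of fun y x =>
      if y = x + (a + a') then
        ((-1:ℂ)) ^ (∑ i, (b i).val * ((x + a') i).val) * (-1:ℂ) ^ (∑ i, (b' i).val * (x i).val)
      else 0 := by
  ext y x
  rw [Matrix.mul_apply]
  simp only [PauliD_eq, Matrix.of_apply]
  rw [Finset.sum_eq_single (x + a')]
  · rw [if_pos rfl]
    have harr : x + a' + a = x + (a + a') := by
      funext i; simp [Pi.add_apply]; ring
    rw [harr]
    simp [ite_mul, zero_mul]
  · intro z _ hz
    rw [if_neg hz, mul_zero]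
  · intro h; exact absurd (Finset.mem_univ _) h

lemma key_zmod4 (m : ℕ) (A Y W B S : Fin m → ZMod 4) (p : Fin m → Fin m → ZMod 4)
    (hp : ∀ i j, p i j = p j i)
    (hS : ∀ i, S i = Y i + A i + 2 * (Y i * A i))
    (hB : ∀ j, 2 * B j = 2 * ∑ i, A i * p i j) :
    (∑ i, A i * B i) + 2 * (∑ i, B i * S i)
      + ((∑ i, ∑ j, S i * p i j * S j) + 2 * ∑ i, W i * S i)
    = ((3 * ∑ i, A i * B i) + (∑ i, ∑ j, A i * p i j * A j) + 2 * ∑ i, W i * A i)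
      + ((∑ i, ∑ j, Y i * p i j * Y j) + 2 * ∑ i, W i * Y i) := by
  have h4 : (4 : ZMod 4) = 0 := by decide
  have e1 : ∀ i, 2 * S i = 2 * (Y i + A i) := by
    intro i; rw [hS i]; linear_combination (Y i * A i) * h4
  have convY : (∑ i, (∑ k, A k * p k i) * Y i) = ∑ i, ∑ j, A i * p i j * Y j := by
    simp only [Finset.sum_mul]
    exact Finset.sum_comm
  have convA : (∑ i, (∑ k, A k * p k i) * A i) = ∑ i, ∑ j, A i * p i j * A j := by
    simp only [Finset.sum_mul]
    exact Finset.sum_comm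
  have hW2 : 2 * (∑ i, W i * S i) = 2 * (∑ i, W i * Y i) + 2 * (∑ i, W i * A i) := by
    rw [Finset.mul_sum, Finset.mul_sum, Finset.mul_sum, ← Finset.sum_add_distrib]
    refine Finset.sum_congr rfl fun i _ => ?_
    linear_combination (W i) * e1 i
  have hBS : 2 * (∑ i, B i * S i)
      = 2 * (∑ i, (∑ k, A k * p k i) * Y i) + 2 * (∑ i, (∑ k, A k * p k i) * A i) := by
    simp only [Finset.mul_sum, ← Finset.sum_add_distrib]
    refine Finset.sum_congr rfl fun i _ => ?_
    linear_combination (S i) * hB i + (∑ k, A k * p k i) * e1 i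
  have hAB : 2 * (∑ i, A i * B i) = 2 * (∑ i, (∑ k, A k * p k i) * A i) := by
    simp only [Finset.mul_sum]
    refine Finset.sum_congr rfl fun i _ => ?_
    linear_combination (A i) * hB i
  have hcross : (∑ i, ∑ j, Y i * p i j * A j) = ∑ i, ∑ j, A i * p i j * Y j := by
    rw [Finset.sum_comm]
    refine Finset.sum_congr rfl fun i _ => Finset.sum_congr rfl fun j _ => ?_
    rw [hp j i]; ring
  have hD1 : (∑ i, ∑ j, Y j * A j * p i j * Y i) = ∑ i, ∑ j, Y i * A i * p i j * Y j := by
    rw [Finset.sum_comm]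
    refine Finset.sum_congr rfl fun i _ => Finset.sum_congr rfl fun j _ => ?_
    rw [hp j i]
  have hD2 : (∑ i, ∑ j, Y j * A j * p i j * A i) = ∑ i, ∑ j, Y i * A i * p i j * A j := by
    rw [Finset.sum_comm]
    refine Finset.sum_congr rfl fun i _ => Finset.sum_congr rfl fun j _ => ?_
    rw [hp j i]
  have hQs : (∑ i, ∑ j, S i * p i j * S j)
      = (∑ i, ∑ j, Y i * p i j * Y j) + (∑ i, ∑ j, A i * p i j * A j)
        + 2 * (∑ i, ∑ j, A i * p i j * Y j) := by
    have expand : ∀ i j, S i * p i j * S j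
        = Y i * p i j * Y j + A i * p i j * A j
          + (Y i * p i j * A j + A i * p i j * Y j)
          + 2 * (Y i * A i * p i j * Y j) + 2 * (Y i * A i * p i j * A j)
          + 2 * (Y j * A j * p i j * Y i) + 2 * (Y j * A j * p i j * A i) := by
      intro i j
      rw [hS i, hS j]
      linear_combination (Y i * A i * p i j * Y j * A j) * h4
    calc (∑ i, ∑ j, S i * p i j * S j)
        = ∑ i, ∑ j, (Y i * p i j * Y j + A i * p i j * A j
          + (Y i * p i j * A j + A i * p i j * Y j)
          + 2 * (Y i * A i * p i j * Y j) + 2 * (Y i * A i * p i j * A j)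
          + 2 * (Y j * A j * p i j * Y i) + 2 * (Y j * A j * p i j * A i)) := by
          exact Finset.sum_congr rfl fun i _ => Finset.sum_congr rfl fun j _ => expand i j
      _ = (∑ i, ∑ j, Y i * p i j * Y j) + (∑ i, ∑ j, A i * p i j * A j)
          + ((∑ i, ∑ j, Y i * p i j * A j) + (∑ i, ∑ j, A i * p i j * Y j))
          + 2 * (∑ i, ∑ j, Y i * A i * p i j * Y j) + 2 * (∑ i, ∑ j, Y i * A i * p i j * A j)
          + 2 * (∑ i, ∑ j, Y j * A j * p i j * Y i) + 2 * (∑ i, ∑ j, Y j * A j * p i j * A i) := by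
          simp only [Finset.sum_add_distrib, Finset.mul_sum]
      _ = (∑ i, ∑ j, Y i * p i j * Y j) + (∑ i, ∑ j, A i * p i j * A j)
          + 2 * (∑ i, ∑ j, A i * p i j * Y j) := by
          rw [hcross, hD1, hD2]
          linear_combination ((∑ i, ∑ j, Y i * A i * p i j * Y j)
            + (∑ i, ∑ j, Y i * A i * p i j * A j)) * h4
  rw [convA] at hAB
  rw [hQs, hW2, hBS, convY, convA]
  linear_combination (-1 : ZMod 4) * hAB + (∑ i, ∑ j, A i * p i j * Y j) * h4

/-- For a binary symmetric matrix `P` and `w ∈ F_2^m`, the vector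
`v = (i^{xPxᵀ + 2wxᵀ})_x` is a common eigenvector, with eigenvalues `±1`, of
the `2^m` commuting Pauli operators `E(a, aP)`. -/
theorem quaternary_phase_vector_is_common_eigenvector
    (m : ℕ) (P : Matrix (Fin m) (Fin m) (ZMod 2)) (hP : P.IsSymm)
    (w : Fin m → ZMod 2) (v : (Fin m → ZMod 2) → ℂ)
    (hv : v = fun x => Complex.I ^
      ((∑ i, ∑ j, (x i).val * (P i j).val * (x j).val) +
        2 * ∑ i, (w i).val * (x i).val)) :
    (∀ a a' : Fin m → ZMod 2,
        PauliE m a (Matrix.vecMul a P) * PauliE m a' (Matrix.vecMul a' P) =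
          PauliE m a' (Matrix.vecMul a' P) * PauliE m a (Matrix.vecMul a P)) ∧
    (∀ a : Fin m → ZMod 2, ∃ ε : ℂ, (ε = 1 ∨ ε = -1) ∧
        (PauliE m a (Matrix.vecMul a P)).mulVec v = ε • v) := by
  subst hv
  constructor
  · -- commutativity
    intro a a'
    have hkey : (∑ i, Matrix.vecMul a P i * a' i) = ∑ i, Matrix.vecMul a' P i * a i := by
      simp only [Matrix.vecMul, dotProduct, Finset.sum_mul]
      rw [Finset.sum_comm]
      refine Finset.sum_congr rfl fun i _ => Finset.sum_congr rfl fun j _ => ?_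
      rw [hP.apply i j]; ring
    simp only [PauliE]
    rw [smul_mul_assoc, mul_smul_comm, smul_mul_assoc, mul_smul_comm, smul_smul, smul_smul,
      mul_comm (Complex.I ^ (∑ i, ((a' i).val * ((Matrix.vecMul a' P) i).val)))]
    congr 1
    rw [D_mul_D, D_mul_D]
    ext y x
    simp only [Matrix.of_apply]
    rw [add_comm a' a]
    split_ifs with h
    · rw [← pow_add, ← pow_add]
      apply neg_one_pow_congr'
      push_cast [bit2]
      simp only [Pi.add_apply, mul_add, Finset.sum_add_distrib]
      linear_combination hkey
    · rfl
  · -- eigenvector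
    intro a
    set C : ℕ := 3 * (∑ i, (a i).val * ((Matrix.vecMul a P) i).val)
      + (∑ i, ∑ j, (a i).val * (P i j).val * (a j).val)
      + 2 * (∑ i, (w i).val * (a i).val) with hC
    have hpar : C % 2 = 0 := by
      have h2 : ((C : ℕ) : ZMod 2) = 0 := by
        rw [hC]
        push_cast [bit2]
        have hdd : (∑ i, a i * Matrix.vecMul a P i) = ∑ i, ∑ j, a i * P i j * a j := by
          simp only [Matrix.vecMul, dotProduct, Finset.mul_sum]
          rw [Finset.sum_comm]
          refine Finset.sum_congr rfl fun i _ => Finset.sum_congr rfl fun j _ => ?_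
          ring
        rw [hdd]
        have h4 : (4 : ZMod 2) = 0 := by decide
        have h2' : (2 : ZMod 2) = 0 := by decide
        linear_combination (∑ i, ∑ j, a i * P i j * a j) * h4 + (∑ i, w i * a i) * h2'
      calc C % 2 = ((C : ℕ) : ZMod 2).val := (ZMod.val_natCast 2 C).symm
        _ = (0 : ZMod 2).val := by rw [h2]
        _ = 0 := rfl
    refine ⟨Complex.I ^ C, ?_, ?_⟩
    · apply mul_self_eq_one_iff.mp
      rw [← pow_add]
      have hzero : ((C + C : ℕ) : ZMod 4) = ((0 : ℕ) : ZMod 4) := by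
        push_cast
        have h2c : (C : ZMod 4) + C = 2 * (C : ZMod 4) := by ring
        rw [h2c, two_mul_cast, hpar]
        norm_num
      rw [I_pow_congr hzero, pow_zero]
    · have hB' : ∀ j, 2 * (((Matrix.vecMul a P) j).val : ZMod 4)
          = 2 * ∑ i, ((a i).val : ZMod 4) * ((P i j).val : ZMod 4) := by
        intro j
        have hn : ((Matrix.vecMul a P) j).val = (∑ i, (a i).val * (P i j).val) % 2 := by
          have hcast : ((∑ i, (a i).val * (P i j).val : ℕ) : ZMod 2) = Matrix.vecMul a P j := by
            push_cast [bit2]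
            simp [Matrix.vecMul, dotProduct]
          rw [← hcast, ZMod.val_natCast]
        rw [hn, ← two_mul_cast]
        push_cast
        ring
      rw [PauliE, PauliD_eq, Matrix.smul_mulVec]
      funext y
      simp only [Pi.smul_apply, smul_eq_mul, Matrix.mulVec, dotProduct, Matrix.of_apply]
      rw [Finset.sum_eq_single (y + a)]
      · rw [if_pos (add_self_vec y a).symm]
        rw [show ((-1:ℂ)) = Complex.I ^ 2 from (Complex.I_sq).symm, ← pow_mul,
          ← pow_add, ← pow_add, ← pow_add]
        apply I_pow_congr
        rw [hC]
        push_cast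
        linear_combination key_zmod4 m (fun i => ((a i).val : ZMod 4))
          (fun i => ((y i).val : ZMod 4)) (fun i => ((w i).val : ZMod 4))
          (fun i => (((Matrix.vecMul a P) i).val : ZMod 4))
          (fun i => (((y + a) i).val : ZMod 4))
          (fun i j => ((P i j).val : ZMod 4))
          (fun i j => by
            show ((P i j).val : ZMod 4) = ((P j i).val : ZMod 4)
            rw [hP.apply i j])
          (fun i => B1 (y i) (a i))
          hB'
      · intro x _ hx
        rw [if_neg (show ¬ y = x + a from fun h => hx (by rw [h, add_self_vec])), zero_mul]
      · intro h; exact absurd (Finset.mem_univ _) h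
end

section
/- Let P_1, P_2 be binary symmetric m×m matrices with rank(P_1 + P_2) = k, and let u = (i^{xP_1x^T + 2w_1x^T})_x, v = (i^{xP_2x^T + 2w_2x^T})_x be unnormalized common eigenvectors as above. Then for fixed v, as u runs over the 2^m eigenvectors associated with P_1, the squared Hermitian inner product |⟨u,v⟩|^2 equals 2^{2m−k} for exactly 2^k choices of u, and 0 for the remaining 2^m − 2^k choices. -/
open Matrix BigOperators Finset

lemma I_pow_four' : Complex.I ^ 4 = 1 := by
  rw [show (4:ℕ) = 2*2 by rfl, pow_mul, Complex.I_sq]; norm_num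

lemma I_pow_mod (n : ℕ) : Complex.I ^ n = Complex.I ^ (n % 4) := by
  conv_lhs => rw [← Nat.div_add_mod n 4]
  rw [pow_add, pow_mul, I_pow_four', one_pow, one_mul]

noncomputable def χ (t : ZMod 4) : ℂ := Complex.I ^ t.val

lemma χ_natCast (n : ℕ) : χ (n : ZMod 4) = Complex.I ^ n := by
  rw [χ, ZMod.val_natCast, ← I_pow_mod]

lemma valCast_self (t : ZMod 4) : ((t.val : ℕ) : ZMod 4) = t := by
  rw [ZMod.natCast_val, ZMod.cast_id]

lemma χ_add (s t : ZMod 4) : χ (s + t) = χ s * χ t := by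
  have : s + t = ((s.val + t.val : ℕ) : ZMod 4) := by
    push_cast [valCast_self]; ring
  rw [this, χ_natCast, pow_add, χ, χ]

variable {m : ℕ}

/-- lifted vector -/
def lv (x : Fin m → ZMod 2) : Fin m → ZMod 4 := fun i => ((x i).val : ZMod 4)
/-- lifted matrix -/
def lm (P : Matrix (Fin m) (Fin m) (ZMod 2)) : Matrix (Fin m) (Fin m) (ZMod 4) :=
  fun i j => ((P i j).val : ZMod 4)

def q4 (P : Matrix (Fin m) (Fin m) (ZMod 2)) (x : Fin m → ZMod 2) : ZMod 4 :=
  lv x ⬝ᵥ (lm P *ᵥ lv x)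

def b4 (P : Matrix (Fin m) (Fin m) (ZMod 2)) (x y : Fin m → ZMod 2) : ZMod 4 :=
  lv x ⬝ᵥ (lm P *ᵥ lv y)

lemma q4_eq_sum (P : Matrix (Fin m) (Fin m) (ZMod 2)) (x : Fin m → ZMod 2) :
    q4 P x = ((∑ i, ∑ j, (x i).val * (P i j).val * (x j).val : ℕ) : ZMod 4) := by
  push_cast
  simp only [q4, dotProduct, Matrix.mulVec, dotProduct, lv, lm, Finset.mul_sum]
  exact Finset.sum_congr rfl fun i _ => Finset.sum_congr rfl fun j _ => by ring

lemma lv_add (x y : Fin m → ZMod 2) :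
    lv (x + y) = lv x + lv y + 2 • (lv x * lv y) := by
  funext i
  have h : ∀ a b : ZMod 2,
      (((a+b).val : ℕ) : ZMod 4) = ((a.val : ℕ) : ZMod 4) + (b.val : ℕ) + 2 * ((a.val : ℕ) * (b.val : ℕ)) := by decide
  simpa [lv, Pi.add_apply, Pi.mul_apply, two_smul, two_mul] using h (x i) (y i)

lemma symm4 (P : Matrix (Fin m) (Fin m) (ZMod 2)) (hP : P.IsSymm)
    (a b : Fin m → ZMod 4) : a ⬝ᵥ (lm P *ᵥ b) = b ⬝ᵥ (lm P *ᵥ a) := by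
  have hsym : (lm P)ᵀ = lm P := by
    funext i j
    simp only [Matrix.transpose_apply, lm]
    rw [hP.apply i j]
  rw [Matrix.dotProduct_mulVec, ← Matrix.mulVec_transpose, hsym, dotProduct_comm]

lemma q4_add (P : Matrix (Fin m) (Fin m) (ZMod 2)) (hP : P.IsSymm)
    (x y : Fin m → ZMod 2) :
    q4 P (x + y) = q4 P x + q4 P y + 2 * b4 P x y := by
  set X := lv x; set Y := lv y; set Z : Fin m → ZMod 4 := 2 • (X * Y) with hZ
  have key : ∀ a : Fin m → ZMod 4, a ⬝ᵥ (lm P *ᵥ Z) = 2 * (a ⬝ᵥ (lm P *ᵥ (X*Y))) := by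
    intro a
    rw [hZ, Matrix.mulVec_smul, dotProduct_smul, two_smul, two_mul]
  have expand : q4 P (x + y) =
      X ⬝ᵥ (lm P *ᵥ X) + Y ⬝ᵥ (lm P *ᵥ Y)
      + (X ⬝ᵥ (lm P *ᵥ Y) + Y ⬝ᵥ (lm P *ᵥ X))
      + (X ⬝ᵥ (lm P *ᵥ Z) + Z ⬝ᵥ (lm P *ᵥ X))
      + (Y ⬝ᵥ (lm P *ᵥ Z) + Z ⬝ᵥ (lm P *ᵥ Y))
      + Z ⬝ᵥ (lm P *ᵥ Z) := by
    rw [q4, lv_add]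
    simp only [Matrix.mulVec_add, dotProduct_add, add_dotProduct]
    ring
  rw [expand]
  have s1 : Y ⬝ᵥ (lm P *ᵥ X) = X ⬝ᵥ (lm P *ᵥ Y) := symm4 P hP Y X
  have s2 : Z ⬝ᵥ (lm P *ᵥ X) = X ⬝ᵥ (lm P *ᵥ Z) := symm4 P hP Z X
  have s3 : Z ⬝ᵥ (lm P *ᵥ Y) = Y ⬝ᵥ (lm P *ᵥ Z) := symm4 P hP Z Y
  have four : (2 : ZMod 4) * 2 = 0 := by decide
  rw [s1, s2, s3, key X, key Y, key Z]
  have hZ2 : Z ⬝ᵥ (lm P *ᵥ (X*Y)) = 2 * ((X*Y) ⬝ᵥ (lm P *ᵥ (X*Y))) := by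
    rw [hZ, smul_dotProduct, two_smul, two_mul]
  rw [hZ2]
  have : q4 P x = X ⬝ᵥ (lm P *ᵥ X) := rfl
  rw [this]
  have : q4 P y = Y ⬝ᵥ (lm P *ᵥ Y) := rfl
  rw [this]
  have : b4 P x y = X ⬝ᵥ (lm P *ᵥ Y) := rfl
  rw [this]
  generalize X ⬝ᵥ (lm P *ᵥ Y) = A
  generalize X ⬝ᵥ (lm P *ᵥ (X*Y)) = B
  generalize Y ⬝ᵥ (lm P *ᵥ (X*Y)) = C
  generalize (X*Y) ⬝ᵥ (lm P *ᵥ (X*Y)) = D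
  generalize q4 P x = E
  generalize Y ⬝ᵥ (lm P *ᵥ Y) = F
  linear_combination (B + C + D) * four

variable {m : ℕ}

def ddd (t : ZMod 2) : ZMod 4 := 2 * (t.val : ZMod 4)

lemma ddd_add (s t : ZMod 2) : ddd (s + t) = ddd s + ddd t := by revert s t; decide

lemma ddd_zero : ddd 0 = 0 := by decide

lemma three_ddd (t : ZMod 2) : 3 * ddd t = ddd t := by revert t; decide

lemma two_natCast (n : ℕ) : 2 * ((n : ℕ) : ZMod 4) = ddd ((n : ZMod 2)) := by
  rcases Nat.even_or_odd n with ⟨c, rfl⟩ | ⟨c, rfl⟩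
  · have h2 : ((2 * c : ℕ) : ZMod 2) = 0 := by
      push_cast
      rw [show ((2:ZMod 2)) = 0 by decide, zero_mul]
    rw [show c + c = 2 * c by ring, h2, ddd_zero]
    push_cast
    have : ((4 : ℕ) : ZMod 4) = 0 := ZMod.natCast_self 4
    calc (2 : ZMod 4) * (2 * c) = ((4:ℕ):ZMod 4) * c := by push_cast; ring
    _ = 0 := by rw [this, zero_mul]
  · have h2 : ((2 * c + 1 : ℕ) : ZMod 2) = 1 := by
      push_cast
      rw [show ((2:ZMod 2)) = 0 by decide, zero_mul, zero_add]
    rw [h2]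
    have : ((4 : ℕ) : ZMod 4) = 0 := ZMod.natCast_self 4
    push_cast
    calc (2 : ZMod 4) * (2 * c + 1) = ((4:ℕ):ZMod 4) * c + 2 := by push_cast; ring
    _ = 2 := by rw [this]; ring
    _ = ddd 1 := by decide

variable {m : ℕ}

lemma zmod2_cases : ∀ a : ZMod 2, a = 0 ∨ a = 1 := by decide

lemma neg_one_pow_add (s t : ZMod 2) :
    ((-1 : ℂ)) ^ (s + t).val = (-1:ℂ) ^ s.val * (-1:ℂ) ^ t.val := by
  have h : ∀ a : ZMod 2, a = 0 ∨ a = 1 := by decide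
  rcases h s with rfl | rfl <;> rcases h t with rfl | rfl <;>
    simp only [show ((1:ZMod 2)+1) = 0 by decide, zero_add, add_zero,
      show (0:ZMod 2).val = 0 by rfl, show (1:ZMod 2).val = 1 by rfl] <;>
    norm_num

lemma card_V : Fintype.card (Fin m → ZMod 2) = 2 ^ m := by
  simp [ZMod.card]

lemma sum_char_zero (a : Fin m → ZMod 2) (ha : a ≠ 0) :
    ∑ x : Fin m → ZMod 2, (-1 : ℂ) ^ (a ⬝ᵥ x).val = 0 := by
  obtain ⟨i, hi⟩ : ∃ i, a i ≠ 0 := by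
    by_contra h
    push_neg at h
    exact ha (funext h)
  have hai : a i = 1 := by
    rcases zmod2_cases (a i) with h | h
    · exact absurd h hi
    · exact h
  set f : (Fin m → ZMod 2) → ℂ := fun x => (-1 : ℂ) ^ (a ⬝ᵥ x).val with hf
  set e : Fin m → ZMod 2 := Pi.single i 1 with he
  have key : ∀ x, f (x + e) = - f x := by
    intro x
    have : a ⬝ᵥ (x + e) = a ⬝ᵥ x + 1 := by
      rw [dotProduct_add, he, dotProduct_single, hai, one_mul]
    simp only [hf, this, neg_one_pow_add, show (1 : ZMod 2).val = 1 by decide]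
    norm_num
  have h1 : ∑ x, f x = ∑ x, f (x + e) :=
    (Fintype.sum_equiv (Equiv.addRight e) (fun x => f (x + e)) f (fun x => rfl)).symm
  have hS : ∑ x, f x = - ∑ x, f x := by
    nth_rewrite 1 [h1]
    calc ∑ x, f (x + e) = ∑ x, - f x := Finset.sum_congr rfl fun x _ => key x
    _ = - ∑ x, f x := by rw [← Finset.sum_neg_distrib]
  have h2 : (∑ x, f x) + (∑ x, f x) = 0 := by
    nth_rewrite 2 [hS]
    ring
  exact add_self_eq_zero.mp h2

lemma sum_char (a : Fin m → ZMod 2) :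
    ∑ x : Fin m → ZMod 2, (-1 : ℂ) ^ (a ⬝ᵥ x).val
      = if a = 0 then ((2:ℂ) ^ m) else 0 := by
  by_cases h : a = 0
  · subst h
    simp only [zero_dotProduct, if_true]
    rw [show ((0 : ZMod 2)).val = 0 from rfl]
    simp [Finset.card_univ, card_V]
  · rw [if_neg h]; exact sum_char_zero a h

lemma card_ker (A : Matrix (Fin m) (Fin m) (ZMod 2)) :
    (Finset.univ.filter (fun z : Fin m → ZMod 2 => A *ᵥ z = 0)).card
      = 2 ^ (m - A.rank) := by
  have h1 : (Finset.univ.filter (fun z : Fin m → ZMod 2 => A *ᵥ z = 0)).card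
      = Fintype.card {z : Fin m → ZMod 2 // A *ᵥ z = 0} :=
    (Fintype.card_subtype _).symm
  letI : Fintype (LinearMap.ker A.mulVecLin) := Fintype.ofFinite _
  have e : {z : Fin m → ZMod 2 // A *ᵥ z = 0} ≃ LinearMap.ker A.mulVecLin :=
    Equiv.subtypeEquivRight (fun z => by
      simp [LinearMap.mem_ker, Matrix.mulVecLin_apply])
  rw [h1, Fintype.card_congr e]
  have hcard : Fintype.card (LinearMap.ker A.mulVecLin)
      = 2 ^ Module.finrank (ZMod 2) (LinearMap.ker A.mulVecLin) := by
    have := Module.card_eq_pow_finrank (K := ZMod 2) (V := LinearMap.ker A.mulVecLin)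
    simpa [ZMod.card] using this
  rw [hcard]
  congr 1
  have hrn := LinearMap.finrank_range_add_finrank_ker (A.mulVecLin)
  have hfin : Module.finrank (ZMod 2) (Fin m → ZMod 2) = m := by
    simp [Module.finrank_pi]
  rw [hfin] at hrn
  have : A.rank = Module.finrank (ZMod 2) (LinearMap.range A.mulVecLin) := rfl
  omega

-- ============ middle layer ============

lemma b4_eq_sum (P : Matrix (Fin m) (Fin m) (ZMod 2)) (x y : Fin m → ZMod 2) :
    b4 P x y = ((∑ i, ∑ j, (x i).val * (P i j).val * (y j).val : ℕ) : ZMod 4) := by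
  push_cast
  simp only [b4, dotProduct, Matrix.mulVec, dotProduct, lv, lm, Finset.mul_sum]
  exact Finset.sum_congr rfl fun i _ => Finset.sum_congr rfl fun j _ => by ring

lemma bl_eq_sum (P : Matrix (Fin m) (Fin m) (ZMod 2)) (x y : Fin m → ZMod 2) :
    x ⬝ᵥ (P *ᵥ y) = ((∑ i, ∑ j, (x i).val * (P i j).val * (y j).val : ℕ) : ZMod 2) := by
  push_cast [ZMod.natCast_val, ZMod.cast_id]
  simp only [dotProduct, Matrix.mulVec, dotProduct, Finset.mul_sum]
  exact Finset.sum_congr rfl fun i _ => Finset.sum_congr rfl fun j _ => by ring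

lemma dot_eq_sum (w x : Fin m → ZMod 2) :
    w ⬝ᵥ x = ((∑ i, (w i).val * (x i).val : ℕ) : ZMod 2) := by
  push_cast [ZMod.natCast_val, ZMod.cast_id]
  simp only [dotProduct]

lemma b4_cast (P : Matrix (Fin m) (Fin m) (ZMod 2)) (x y : Fin m → ZMod 2) :
    2 * b4 P x y = ddd (x ⬝ᵥ (P *ᵥ y)) := by
  rw [b4_eq_sum, two_natCast, bl_eq_sum]

lemma χ_ddd (t : ZMod 2) : χ (ddd t) = (-1 : ℂ) ^ t.val := by
  rcases zmod2_cases t with rfl | rfl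
  · rw [ddd_zero]; simp [χ, show (0 : ZMod 4).val = 0 from rfl]
  · rw [show ddd 1 = 2 by decide, show (1 : ZMod 2).val = 1 by decide]
    simp [χ, show (2 : ZMod 4).val = 2 by decide, pow_two, Complex.I_mul_I]

lemma χ_zero : χ 0 = 1 := by simp [χ, show (0 : ZMod 4).val = 0 from rfl]

lemma χ_conj (t : ZMod 4) : (starRingEnd ℂ) (χ t) = χ (3 * t) := by
  have h3 : (3 : ZMod 4) * t = ((3 * t.val : ℕ) : ZMod 4) := by
    push_cast [valCast_self]; ring
  rw [h3, χ_natCast, χ, map_pow, Complex.conj_I]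
  rw [pow_mul]
  congr 1
  rw [show Complex.I ^ 3 = Complex.I ^ 2 * Complex.I by ring, Complex.I_sq]
  ring

section Smachine

variable (P1 P2 : Matrix (Fin m) (Fin m) (ZMod 2))

noncomputable def fS (c x : Fin m → ZMod 2) : ZMod 4 :=
  q4 P2 x + 3 * q4 P1 x + ddd (c ⬝ᵥ x)

noncomputable def Sc (c : Fin m → ZMod 2) : ℂ := ∑ x, χ (fS P1 P2 c x)

lemma four_mul (t : ZMod 4) : 4 * t = 0 := by
  rw [show (4 : ZMod 4) = 0 by decide, zero_mul]

lemma two_ddd (t : ZMod 2) : 2 * ddd t = 0 := by revert t; decide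

lemma fS_add (hP1 : P1.IsSymm) (hP2 : P2.IsSymm) (c y z : Fin m → ZMod 2) :
    fS P1 P2 c (y + z)
      = fS P1 P2 c y + fS P1 P2 c z + ddd (y ⬝ᵥ ((P1 + P2) *ᵥ z)) := by
  unfold fS
  rw [q4_add P2 hP2, q4_add P1 hP1, dotProduct_add, ddd_add]
  have h1 : 2 * b4 P1 y z = ddd (y ⬝ᵥ (P1 *ᵥ z)) := b4_cast P1 y z
  have h2 : 2 * b4 P2 y z = ddd (y ⬝ᵥ (P2 *ᵥ z)) := b4_cast P2 y z
  have hPadd : y ⬝ᵥ ((P1 + P2) *ᵥ z) = y ⬝ᵥ (P1 *ᵥ z) + y ⬝ᵥ (P2 *ᵥ z) := by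
    rw [Matrix.add_mulVec, dotProduct_add]
  rw [hPadd, ddd_add]
  linear_combination h2 + 3 * h1 + two_ddd (y ⬝ᵥ (P1 *ᵥ z))

lemma fS_zero (c : Fin m → ZMod 2) : fS P1 P2 c 0 = 0 := by
  have hlv : lv (0 : Fin m → ZMod 2) = 0 := by
    funext i; simp [lv, show ((0:ZMod 2)).val = 0 from rfl]
  have hq : ∀ P : Matrix (Fin m) (Fin m) (ZMod 2), q4 P 0 = 0 := by
    intro P; rw [q4, hlv, zero_dotProduct]
  rw [fS, hq, hq, dotProduct_zero, ddd_zero]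
  ring

end Smachine

section Smain

variable (P1 P2 : Matrix (Fin m) (Fin m) (ZMod 2))

lemma Sc_mul_conj (hP1 : P1.IsSymm) (hP2 : P2.IsSymm) (c : Fin m → ZMod 2) :
    Sc P1 P2 c * (starRingEnd ℂ) (Sc P1 P2 c)
      = (2 ^ m : ℂ) *
        ∑ z ∈ Finset.univ.filter (fun z : Fin m → ZMod 2 => (P1 + P2) *ᵥ z = 0),
          χ (fS P1 P2 c z) := by
  classical
  rw [Sc, map_sum, Finset.sum_mul_sum]
  have step1 : ∀ x y : Fin m → ZMod 2,
      χ (fS P1 P2 c x) * (starRingEnd ℂ) (χ (fS P1 P2 c y))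
        = χ (fS P1 P2 c x + 3 * fS P1 P2 c y) := by
    intro x y; rw [χ_conj, ← χ_add]
  calc (∑ x : Fin m → ZMod 2, ∑ y : Fin m → ZMod 2,
        χ (fS P1 P2 c x) * (starRingEnd ℂ) (χ (fS P1 P2 c y)))
      = ∑ y : Fin m → ZMod 2, ∑ x : Fin m → ZMod 2,
          χ (fS P1 P2 c x + 3 * fS P1 P2 c y) := by
        rw [Finset.sum_comm]
        exact Finset.sum_congr rfl fun y _ => Finset.sum_congr rfl fun x _ => step1 x y
    _ = ∑ y : Fin m → ZMod 2, ∑ z : Fin m → ZMod 2,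
          χ (fS P1 P2 c (y + z) + 3 * fS P1 P2 c y) := by
        refine Finset.sum_congr rfl fun y _ => ?_
        exact (Fintype.sum_equiv (Equiv.addLeft y)
          (fun z => χ (fS P1 P2 c (y + z) + 3 * fS P1 P2 c y))
          (fun x => χ (fS P1 P2 c x + 3 * fS P1 P2 c y)) (fun z => rfl)).symm
    _ = ∑ y : Fin m → ZMod 2, ∑ z : Fin m → ZMod 2,
          χ (fS P1 P2 c z) * (-1:ℂ) ^ (((P1 + P2) *ᵥ z) ⬝ᵥ y).val := by
        refine Finset.sum_congr rfl fun y _ => Finset.sum_congr rfl fun z _ => ?_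
        have harg : fS P1 P2 c (y + z) + 3 * fS P1 P2 c y
            = fS P1 P2 c z + ddd (y ⬝ᵥ ((P1 + P2) *ᵥ z)) := by
          rw [fS_add P1 P2 hP1 hP2 c y z]
          linear_combination four_mul (fS P1 P2 c y)
        rw [harg, χ_add, χ_ddd, dotProduct_comm]
    _ = ∑ z : Fin m → ZMod 2, χ (fS P1 P2 c z) *
          ∑ y : Fin m → ZMod 2, (-1:ℂ) ^ (((P1 + P2) *ᵥ z) ⬝ᵥ y).val := by
        rw [Finset.sum_comm]
        exact Finset.sum_congr rfl fun z _ => by rw [Finset.mul_sum]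
    _ = ∑ z : Fin m → ZMod 2, χ (fS P1 P2 c z) *
          (if (P1 + P2) *ᵥ z = 0 then ((2:ℂ) ^ m) else 0) := by
        refine Finset.sum_congr rfl fun z _ => ?_
        rw [sum_char ((P1 + P2) *ᵥ z)]
    _ = (2 ^ m : ℂ) * ∑ z ∈ Finset.univ.filter
          (fun z : Fin m → ZMod 2 => (P1 + P2) *ᵥ z = 0), χ (fS P1 P2 c z) := by
        rw [Finset.mul_sum, Finset.sum_filter]
        refine Finset.sum_congr rfl fun z _ => ?_
        by_cases h : (P1 + P2) *ᵥ z = 0 <;> simp [h, mul_comm]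

lemma Sc_dichotomy (hP1 : P1.IsSymm) (hP2 : P2.IsSymm) (c : Fin m → ZMod 2) :
    Sc P1 P2 c * (starRingEnd ℂ) (Sc P1 P2 c) = 0 ∨
    Sc P1 P2 c * (starRingEnd ℂ) (Sc P1 P2 c)
      = (2 ^ m : ℂ) * (2 ^ (m - (P1 + P2).rank) : ℂ) := by
  classical
  rw [Sc_mul_conj P1 P2 hP1 hP2 c]
  set K := Finset.univ.filter (fun z : Fin m → ZMod 2 => (P1 + P2) *ᵥ z = 0) with hK
  set ψ : (Fin m → ZMod 2) → ℂ := fun z => χ (fS P1 P2 c z) with hψ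
  have memK : ∀ z, z ∈ K ↔ (P1 + P2) *ᵥ z = 0 := by
    intro z; rw [hK, Finset.mem_filter]; simp
  have hhom : ∀ y z, (P1 + P2) *ᵥ z = 0 → ψ (y + z) = ψ y * ψ z := by
    intro y z hz
    rw [hψ]
    simp only []
    rw [fS_add P1 P2 hP1 hP2 c y z, hz, dotProduct_zero, ddd_zero, add_zero, χ_add]
  have hψ0 : ψ 0 = 1 := by rw [hψ]; simp only []; rw [fS_zero, χ_zero]
  by_cases hall : ∀ z ∈ K, ψ z = 1
  · right
    have : ∑ z ∈ K, ψ z = (K.card : ℂ) := by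
      rw [Finset.sum_congr rfl hall, Finset.sum_const, nsmul_eq_mul, mul_one]
    rw [this, hK, card_ker]
    push_cast
    ring
  · left
    push_neg at hall
    obtain ⟨z0, hz0K, hz0⟩ := hall
    have hz0' : (P1 + P2) *ᵥ z0 = 0 := (memK z0).mp hz0K
    have hsq : ψ z0 * ψ z0 = 1 := by
      rw [← hhom z0 z0 hz0']
      have : z0 + z0 = 0 := by
        funext i
        simp only [Pi.add_apply, Pi.zero_apply]
        exact CharTwo.add_self_eq_zero _
      rw [this, hψ0]
    have hneg : ψ z0 = -1 := by
      rcases mul_self_eq_one_iff.mp hsq with h | h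
      · exact absurd h hz0
      · exact h
    have hbij : ∑ z ∈ K, ψ z = ∑ z ∈ K, ψ (z + z0) := by
      refine Finset.sum_nbij' (fun z => z + z0) (fun z => z + z0) ?_ ?_ ?_ ?_ ?_
      · intro a ha
        rw [memK] at ha ⊢
        rw [Matrix.mulVec_add ((P1+P2)) a z0, ha, hz0', add_zero]
      · intro a ha
        rw [memK] at ha ⊢
        rw [Matrix.mulVec_add ((P1+P2)) a z0, ha, hz0', add_zero]
      · intro a _
        funext i
        simp only [Pi.add_apply]
        rw [add_assoc, CharTwo.add_self_eq_zero, add_zero]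
      · intro a _
        funext i
        simp only [Pi.add_apply]
        rw [add_assoc, CharTwo.add_self_eq_zero, add_zero]
      · intro a _
        congr 1
        funext i
        simp only [Pi.add_apply]
        rw [add_assoc, CharTwo.add_self_eq_zero, add_zero]
    have : ∑ z ∈ K, ψ z = - ∑ z ∈ K, ψ z := by
      nth_rewrite 1 [hbij]
      calc ∑ z ∈ K, ψ (z + z0) = ∑ z ∈ K, -ψ z := by
            refine Finset.sum_congr rfl fun z hz => ?_
            rw [hhom z z0 hz0', hneg]
            ring
        _ = - ∑ z ∈ K, ψ z := by rw [← Finset.sum_neg_distrib]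
    have h2 : (∑ z ∈ K, ψ z) + (∑ z ∈ K, ψ z) = 0 := by
      nth_rewrite 2 [this]
      ring
    rw [add_self_eq_zero.mp h2, mul_zero]

lemma Sc_parseval (hP1 : P1.IsSymm) (hP2 : P2.IsSymm) :
    ∑ c : Fin m → ZMod 2, Sc P1 P2 c * (starRingEnd ℂ) (Sc P1 P2 c)
      = (2 ^ m : ℂ) * (2 ^ m : ℂ) := by
  classical
  have h1 : ∀ c, Sc P1 P2 c * (starRingEnd ℂ) (Sc P1 P2 c)
      = (2 ^ m : ℂ) *
        ∑ z ∈ Finset.univ.filter (fun z : Fin m → ZMod 2 => (P1 + P2) *ᵥ z = 0),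
          χ (fS P1 P2 c z) := fun c => Sc_mul_conj P1 P2 hP1 hP2 c
  rw [Finset.sum_congr rfl (fun c _ => h1 c), ← Finset.mul_sum]
  congr 1
  rw [Finset.sum_comm]
  set K := Finset.univ.filter (fun z : Fin m → ZMod 2 => (P1 + P2) *ᵥ z = 0) with hK
  have hsplit : ∀ z c, χ (fS P1 P2 c z)
      = χ (q4 P2 z + 3 * q4 P1 z) * (-1:ℂ) ^ (z ⬝ᵥ c).val := by
    intro z c
    rw [fS, χ_add, χ_ddd, dotProduct_comm]
  have hzero : (0 : Fin m → ZMod 2) ∈ K := by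
    rw [hK, Finset.mem_filter]
    exact ⟨Finset.mem_univ _, Matrix.mulVec_zero _⟩
  have hterm : ∀ z ∈ K, (∑ c : Fin m → ZMod 2, χ (fS P1 P2 c z))
      = if z = 0 then ((2:ℂ)^m) else 0 := by
    intro z _
    rw [Finset.sum_congr rfl (fun c _ => hsplit z c), ← Finset.mul_sum, sum_char z]
    by_cases h : z = 0
    · subst h
      have : q4 P2 (0 : Fin m → ZMod 2) + 3 * q4 P1 0 = 0 := by
        have := fS_zero P1 P2 (0 : Fin m → ZMod 2)
        rw [fS] at this
        simpa [dotProduct_zero, ddd_zero] using this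
      simp only [if_pos rfl]
      rw [this, χ_zero, one_mul]
    · simp only [if_neg h]
      exact mul_zero _
  rw [Finset.sum_congr rfl hterm, Finset.sum_ite_eq' K 0 (fun _ => ((2:ℂ)^m)), if_pos hzero]

end Smain

lemma T_eq (P1 P2 : Matrix (Fin m) (Fin m) (ZMod 2)) (w w2 : Fin m → ZMod 2) :
    (∑ x : Fin m → ZMod 2, (starRingEnd ℂ) (Complex.I ^
      ((∑ i, ∑ j, (x i).val * (P1 i j).val * (x j).val) +
        2 * ∑ i, (w i).val * (x i).val)) *
      Complex.I ^ ((∑ i, ∑ j, (x i).val * (P2 i j).val * (x j).val) +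
        2 * ∑ i, (w2 i).val * (x i).val))
    = Sc P1 P2 (w + w2) := by
  rw [Sc]
  refine Finset.sum_congr rfl fun x _ => ?_
  set A : ℕ := (∑ i, ∑ j, (x i).val * (P1 i j).val * (x j).val) +
      2 * ∑ i, (w i).val * (x i).val with hAdef
  set B : ℕ := (∑ i, ∑ j, (x i).val * (P2 i j).val * (x j).val) +
      2 * ∑ i, (w2 i).val * (x i).val with hBdef
  have h1 : (starRingEnd ℂ) (Complex.I ^ A) = χ (3 * (A : ZMod 4)) := by
    rw [← χ_natCast A, χ_conj]
  have h2 : Complex.I ^ B = χ ((B : ZMod 4)) := (χ_natCast B).symm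
  rw [h1, h2, ← χ_add]
  congr 1
  have hA : (A : ZMod 4) = q4 P1 x + ddd (w ⬝ᵥ x) := by
    rw [hAdef, Nat.cast_add, ← q4_eq_sum]
    congr 1
    rw [Nat.cast_mul, Nat.cast_ofNat, two_natCast, dot_eq_sum]
  have hB : (B : ZMod 4) = q4 P2 x + ddd (w2 ⬝ᵥ x) := by
    rw [hBdef, Nat.cast_add, ← q4_eq_sum]
    congr 1
    rw [Nat.cast_mul, Nat.cast_ofNat, two_natCast, dot_eq_sum]
  rw [hA, hB, fS, add_dotProduct, ddd_add]
  linear_combination three_ddd (w ⬝ᵥ x)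

/-- Inner product distribution of unnormalized stabilizer eigenvectors:
if `rank(P₁ + P₂) = k`, then for fixed `v` (associated with `P₂`), as `w₁`
ranges over `F_2^m`, `|⟨u_{w₁}, v⟩|² = 2^{2m-k}` for exactly `2^k` vectors and
`⟨u_{w₁}, v⟩ = 0` for the remaining `2^m - 2^k`. -/
theorem eigenvector_inner_product_distribution
    (m k : ℕ) (P1 P2 : Matrix (Fin m) (Fin m) (ZMod 2))
    (hP1 : P1.IsSymm) (hP2 : P2.IsSymm)
    (hk : (P1 + P2).rank = k)
    (w2 : Fin m → ZMod 2) (v : (Fin m → ZMod 2) → ℂ)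
    (hv : v = fun x => Complex.I ^
      ((∑ i, ∑ j, (x i).val * (P2 i j).val * (x j).val) +
        2 * ∑ i, (w2 i).val * (x i).val))
    (u : (Fin m → ZMod 2) → (Fin m → ZMod 2) → ℂ)
    (hu : u = fun w1 x => Complex.I ^
      ((∑ i, ∑ j, (x i).val * (P1 i j).val * (x j).val) +
        2 * ∑ i, (w1 i).val * (x i).val)) :
    Nat.card {w1 : Fin m → ZMod 2 //
        ‖∑ x, (starRingEnd ℂ) (u w1 x) * v x‖ ^ 2 = 2 ^ (2 * m - k)} =
      2 ^ k ∧
    Nat.card {w1 : Fin m → ZMod 2 //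
        (∑ x, (starRingEnd ℂ) (u w1 x) * v x) = 0} = 2 ^ m - 2 ^ k := by
  classical
  subst hk
  set k := (P1 + P2).rank with hkdef
  have hkm : k ≤ m := by
    have := Matrix.rank_le_width (P1 + P2)
    omega
  have hT : ∀ w1, (∑ x, (starRingEnd ℂ) (u w1 x) * v x) = Sc P1 P2 (w1 + w2) := by
    intro w1
    rw [hu, hv]
    exact T_eq P1 P2 w1 w2
  set T : (Fin m → ZMod 2) → ℂ := fun w => Sc P1 P2 (w + w2) with hTdef
  have hTs : ∀ w1, (∑ x, (starRingEnd ℂ) (u w1 x) * v x) = T w1 := hT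
  -- dichotomy in real terms
  have hcast : ((2:ℂ) ^ m * (2:ℂ) ^ (m - k)) = (((2:ℝ) ^ (2*m - k) : ℝ) : ℂ) := by
    push_cast
    rw [← pow_add]
    congr 1
    omega
  have hdich : ∀ w, Complex.normSq (T w) = 0 ∨
      Complex.normSq (T w) = (2:ℝ) ^ (2*m - k) := by
    intro w
    have h := Sc_dichotomy P1 P2 hP1 hP2 (w + w2)
    rw [← hkdef] at h
    rcases h with h | h
    · left
      have : ((Complex.normSq (T w) : ℝ) : ℂ) = 0 := by
        rw [← Complex.mul_conj]; exact h
      exact_mod_cast this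
    · right
      have : ((Complex.normSq (T w) : ℝ) : ℂ) = (((2:ℝ) ^ (2*m - k) : ℝ) : ℂ) := by
        rw [← Complex.mul_conj, h, hcast]
      exact_mod_cast this
  -- Parseval in real terms
  have hpars : ∑ w : Fin m → ZMod 2, Complex.normSq (T w) = (2:ℝ) ^ (2*m) := by
    have hc : ∑ w : Fin m → ZMod 2, T w * (starRingEnd ℂ) (T w)
        = (2 ^ m : ℂ) * (2 ^ m : ℂ) := by
      rw [hTdef]
      calc ∑ w : Fin m → ZMod 2, Sc P1 P2 (w + w2) * (starRingEnd ℂ) (Sc P1 P2 (w + w2))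
          = ∑ c : Fin m → ZMod 2, Sc P1 P2 c * (starRingEnd ℂ) (Sc P1 P2 c) :=
            Fintype.sum_equiv (Equiv.addRight w2)
              (fun w => Sc P1 P2 (w + w2) * (starRingEnd ℂ) (Sc P1 P2 (w + w2)))
              (fun c => Sc P1 P2 c * (starRingEnd ℂ) (Sc P1 P2 c)) (fun w => rfl)
        _ = (2 ^ m : ℂ) * (2 ^ m : ℂ) := Sc_parseval P1 P2 hP1 hP2
    have : ((∑ w : Fin m → ZMod 2, Complex.normSq (T w) : ℝ) : ℂ)
        = (((2:ℝ) ^ (2*m) : ℝ) : ℂ) := by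
      push_cast
      calc ∑ w : Fin m → ZMod 2, ((Complex.normSq (T w) : ℝ) : ℂ)
          = ∑ w : Fin m → ZMod 2, T w * (starRingEnd ℂ) (T w) :=
            Finset.sum_congr rfl fun w _ => (Complex.mul_conj (T w)).symm
        _ = (2 ^ m : ℂ) * (2 ^ m : ℂ) := hc
        _ = (2 : ℂ) ^ (2*m) := by rw [← pow_add]; congr 1; omega
    exact_mod_cast this
  -- the two counting sets
  set p : (Fin m → ZMod 2) → Prop :=
    fun w1 => ‖∑ x, (starRingEnd ℂ) (u w1 x) * v x‖ ^ 2 = 2 ^ (2 * m - k)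
    with hpdef
  have hp2 : ∀ w1, p w1 ↔ Complex.normSq (T w1) = (2:ℝ) ^ (2*m - k) := by
    intro w1
    rw [hpdef]
    simp only [hTs w1, Complex.sq_norm]
  have hcardp : (Finset.univ.filter p).card = 2 ^ k := by
    have hsplit := Finset.sum_filter_add_sum_filter_not Finset.univ p
      (fun w => Complex.normSq (T w))
    have hA : ∑ w ∈ Finset.univ.filter p, Complex.normSq (T w)
        = (Finset.univ.filter p).card * (2:ℝ) ^ (2*m - k) := by
      rw [Finset.sum_congr rfl (fun w hw => (hp2 w).mp (Finset.mem_filter.mp hw).2),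
        Finset.sum_const, nsmul_eq_mul]
    have hB : ∑ w ∈ Finset.univ.filter (fun w => ¬ p w), Complex.normSq (T w) = 0 := by
      refine Finset.sum_eq_zero fun w hw => ?_
      have hnp := (Finset.mem_filter.mp hw).2
      rcases hdich w with h | h
      · exact h
      · exact absurd ((hp2 w).mpr h) hnp
    rw [hA, hB, add_zero, hpars] at hsplit
    have h2m : (2:ℝ) ^ (2*m) = (2:ℝ) ^ (2*m - k) * (2:ℝ) ^ k := by
      rw [← pow_add]; congr 1; omega
    rw [h2m] at hsplit
    have hne : ((2:ℝ) ^ (2*m - k)) ≠ 0 := by positivity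
    have : ((Finset.univ.filter p).card : ℝ) = (2:ℝ) ^ k := by
      calc ((Finset.univ.filter p).card : ℝ)
          = ((Finset.univ.filter p).card : ℝ) * (2:ℝ) ^ (2*m-k) / (2:ℝ) ^ (2*m-k) := by
            field_simp
        _ = (2:ℝ) ^ (2*m - k) * (2:ℝ) ^ k / (2:ℝ) ^ (2*m-k) := by rw [hsplit]
        _ = (2:ℝ) ^ k := by field_simp
    exact_mod_cast this
  have hzero_iff : ∀ w1, (∑ x, (starRingEnd ℂ) (u w1 x) * v x) = 0 ↔ ¬ p w1 := by
    intro w1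
    rw [hTs w1, hp2 w1]
    constructor
    · intro h0 hcon
      rw [h0] at hcon
      simp only [map_zero] at hcon
      have : (0:ℝ) < (2:ℝ) ^ (2*m - k) := by positivity
      rw [← hcon] at this
      exact lt_irrefl 0 this
    · intro hnp
      rcases hdich w1 with h | h
      · exact Complex.normSq_eq_zero.mp h
      · exact absurd h hnp
  constructor
  · rw [Nat.card_eq_fintype_card]
    have : Fintype.card {w1 : Fin m → ZMod 2 // p w1} = (Finset.univ.filter p).card :=
      Fintype.card_subtype p
    exact this.trans hcardp
  · rw [Nat.card_eq_fintype_card]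
    have e1 : Fintype.card {w1 : Fin m → ZMod 2 //
          (∑ x, (starRingEnd ℂ) (u w1 x) * v x) = 0}
        = (Finset.univ.filter (fun w1 => ¬ p w1)).card := by
      rw [Fintype.card_subtype]
      congr 1
      apply Finset.filter_congr
      intro w1 _
      simp only [hzero_iff w1]
    rw [e1]
    have hsum := Finset.card_filter_add_card_filter_not (s := Finset.univ) (p := p)
    have hcardU : (Finset.univ : Finset (Fin m → ZMod 2)).card = 2 ^ m := by
      rw [Finset.card_univ, card_V]
    omega
end

section
/- Let m be odd and P_1 ≠ P_2 be two matrices from the Kerdock set P_K(m) (so P_1 + P_2 is invertible), and let u, v ∈ C^{2^m} be quaternary-phase vectors u = (i^{xP_1x^T + 2w_1x^T + κ_1})_x, v = (i^{xP_2x^T + 2w_2x^T + κ_2})_x. Writing ⟨u,v⟩ = (n_0 − n_2) + (n_1 − n_3) i with n_j the number of coordinates x where the Z_4-valued difference of the codewords equals j, one has (n_0 − n_2)^2 = (n_1 − n_3)^2 = 2^{m−1}. -/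
open Matrix BigOperators

namespace KerdockAux

/-! ### Pointwise `decide` lemmas -/

def chR : ZMod 4 → ℤ := fun j => if j = 0 then 1 else if j = 2 then -1 else 0
def chI : ZMod 4 → ℤ := fun j => if j = 1 then 1 else if j = 3 then -1 else 0

lemma chR_sub : ∀ a b : ZMod 4, chR (a - b) = chR a * chR b + chI a * chI b := by decide

lemma chR_add_two : ∀ (a : ZMod 4) (b : ZMod 2),
    chR (a + 2 * (b.val : ZMod 4)) = chR a * (-1 : ℤ) ^ b.val := by decide

lemma quad_pointwise : ∀ p a b c d : ZMod 2,
    ((((a + b).val * p.val * ((c + d).val) : ℕ) : ZMod 4)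
      - ((a.val * p.val * c.val : ℕ) : ZMod 4)
      - ((b.val * p.val * d.val : ℕ) : ZMod 4)
      - ((a.val * p.val * d.val : ℕ) : ZMod 4)
      - ((b.val * p.val * c.val : ℕ) : ZMod 4))
     + (((((c + d).val * p.val * ((a + b).val) : ℕ)) : ZMod 4)
      - ((c.val * p.val * a.val : ℕ) : ZMod 4)
      - ((d.val * p.val * b.val : ℕ) : ZMod 4)
      - ((c.val * p.val * b.val : ℕ) : ZMod 4)
      - ((d.val * p.val * a.val : ℕ) : ZMod 4)) = 0 := by decide

lemma quad_diag : ∀ p a b : ZMod 2,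
    (((a + b).val * p.val * ((a + b).val) : ℕ) : ZMod 4)
      - ((a.val * p.val * a.val : ℕ) : ZMod 4)
      - ((b.val * p.val * b.val : ℕ) : ZMod 4)
      - ((a.val * p.val * b.val : ℕ) : ZMod 4)
      - ((b.val * p.val * a.val : ℕ) : ZMod 4) = 0 := by decide

lemma lin_pointwise : ∀ w a b : ZMod 2,
    2 * ((w.val * (a + b).val : ℕ) : ZMod 4)
      = 2 * ((w.val * a.val : ℕ) : ZMod 4) + 2 * ((w.val * b.val : ℕ) : ZMod 4) := by decide

lemma sub_two_mul_val : ∀ s t : ZMod 2,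
    2 * ((s.val : ℕ) : ZMod 4) - 2 * ((t.val : ℕ) : ZMod 4)
      = 2 * (((s - t).val : ℕ) : ZMod 4) := by decide

lemma two_mul_natCast (n : ℕ) : (2 * (n : ZMod 4)) = 2 * (((n : ZMod 2)).val : ZMod 4) := by
  have h := Nat.div_add_mod n 2
  rw [ZMod.val_natCast]
  calc 2*(n:ZMod 4) = 2*((2*(n/2) + n % 2 : ℕ) : ZMod 4) := by rw [h]
  _ = 4*((n/2 : ℕ):ZMod 4) + 2*((n % 2 : ℕ) : ZMod 4) := by push_cast; ring
  _ = 2*((n % 2 : ℕ):ZMod 4) := by rw [show (4:ZMod 4) = 0 from rfl]; ring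

/-! ### Integer lemma: `a² + b² = 2^m`, `m` odd, forces `a² = b² = 2^(m-1)` -/

lemma sq_add_sq_two_pow : ∀ m : ℕ, Odd m → ∀ a b : ℤ, a ^ 2 + b ^ 2 = 2 ^ m →
    a ^ 2 = 2 ^ (m - 1) ∧ b ^ 2 = 2 ^ (m - 1) := by
  intro m
  induction m using Nat.strong_induction_on with
  | _ m ih =>
    intro hm a b h
    rcases Nat.lt_or_ge m 3 with h3 | h3
    · interval_cases m
      · exact absurd hm (by decide)
      · have ha2 : a ^ 2 ≤ 2 := by nlinarith [sq_nonneg b]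
        have hb2 : b ^ 2 ≤ 2 := by nlinarith [sq_nonneg a]
        have ha : -1 ≤ a ∧ a ≤ 1 := by
          constructor <;> nlinarith [sq_nonneg (a - 1), sq_nonneg (a + 1)]
        have hb : -1 ≤ b ∧ b ≤ 1 := by
          constructor <;> nlinarith [sq_nonneg (b - 1), sq_nonneg (b + 1)]
        obtain ⟨ha1, ha2'⟩ := ha
        obtain ⟨hb1, hb2'⟩ := hb
        interval_cases a <;> interval_cases b <;> simp_all
      · exact absurd hm (by decide)
    · have hmm : m - 2 < m := by omega
      have hodd : Odd (m - 2) := by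
        rcases hm with ⟨k, hk⟩; exact ⟨k - 1, by omega⟩
      have h4 : ((a : ZMod 4)) ^ 2 + (b : ZMod 4) ^ 2 = 0 := by
        have : ((2 : ZMod 4)) ^ m = 0 := by
          nth_rewrite 1 [show m = 2 + (m - 2) by omega]
          rw [pow_add, show ((2:ZMod 4) ^ 2) = 0 from rfl, zero_mul]
        calc ((a : ZMod 4)) ^ 2 + (b : ZMod 4) ^ 2
            = ((a ^ 2 + b ^ 2 : ℤ) : ZMod 4) := by push_cast; ring
        _ = ((2 ^ m : ℤ) : ZMod 4) := by rw [h]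
        _ = 0 := by push_cast; exact this
      have hsq : ∀ c : ℤ, Odd c → ((c : ZMod 4)) ^ 2 = 1 := by
        rintro c ⟨k, rfl⟩
        have : ((2 * k + 1 : ℤ) : ZMod 4) ^ 2 = 4 * ((k : ZMod 4) ^ 2 + k) + 1 := by
          push_cast; ring
        rw [this, show ((4 : ZMod 4)) = 0 from rfl, zero_mul, zero_add]
      have hea : Even a := by
        by_contra hodd'
        rw [Int.not_even_iff_odd] at hodd'
        rcases Int.even_or_odd b with hb | hb
        · obtain ⟨y, rfl⟩ := hb
          rw [hsq a hodd'] at h4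
          have h2 : ((y + y : ℤ) : ZMod 4) ^ 2 = 0 := by
            push_cast
            have : ((y : ZMod 4) + y) ^ 2 = 4 * (y * y) := by ring
            rw [this, show ((4:ZMod 4)) = 0 from rfl, zero_mul]
          rw [h2] at h4
          exact absurd h4 (by decide)
        · rw [hsq a hodd', hsq b hb] at h4
          exact absurd h4 (by decide)
      have heb : Even b := by
        by_contra hodd'
        rw [Int.not_even_iff_odd] at hodd'
        rw [hsq b hodd'] at h4
        obtain ⟨y, rfl⟩ := hea
        have h2 : ((y + y : ℤ) : ZMod 4) ^ 2 = 0 := by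
          push_cast
          have : ((y : ZMod 4) + y) ^ 2 = 4 * (y * y) := by ring
          rw [this, show ((4:ZMod 4)) = 0 from rfl, zero_mul]
        rw [h2] at h4
        exact absurd h4 (by decide)
      obtain ⟨x, rfl⟩ := hea
      obtain ⟨y, rfl⟩ := heb
      have hred : x ^ 2 + y ^ 2 = 2 ^ (m - 2) := by
        have h2 : (4 : ℤ) * (x ^ 2 + y ^ 2) = 4 * 2 ^ (m - 2) := by
          have : (2 : ℤ) ^ m = 4 * 2 ^ (m - 2) := by
            nth_rewrite 1 [show m = 2 + (m - 2) by omega]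
            rw [pow_add]; norm_num
          nlinarith [h, this]
        exact mul_left_cancel₀ (by norm_num) h2
      obtain ⟨hx, hy⟩ := ih (m - 2) hmm hodd x y hred
      constructor
      · have : (x + x) ^ 2 = 4 * x ^ 2 := by ring
        rw [this, hx, show m - 1 = 2 + (m - 3) by omega, show m - 2 - 1 = m - 3 by omega, pow_add]
        ring
      · have : (y + y) ^ 2 = 4 * y ^ 2 := by ring
        rw [this, hy, show m - 1 = 2 + (m - 3) by omega, show m - 2 - 1 = m - 3 by omega, pow_add]
        ring

/-! ### Quadratic-form identities over `ZMod 4` -/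

variable {m : ℕ}

def qform (M : Matrix (Fin m) (Fin m) (ZMod 2)) (x : Fin m → ZMod 2) : ℕ :=
  ∑ i, ∑ j, (x i).val * (M i j).val * (x j).val

def bform (M : Matrix (Fin m) (Fin m) (ZMod 2)) (x y : Fin m → ZMod 2) : ℕ :=
  ∑ i, ∑ j, (x i).val * (M i j).val * (y j).val

def lform (w x : Fin m → ZMod 2) : ℕ := ∑ i, (w i).val * (x i).val

lemma bil_symm (P : Matrix (Fin m) (Fin m) (ZMod 2)) (hP : ∀ i j, P i j = P j i)
    (x y : Fin m → ZMod 2) : bform P y x = bform P x y := by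
  unfold bform
  rw [Finset.sum_comm]
  refine Finset.sum_congr rfl fun i _ => Finset.sum_congr rfl fun j _ => ?_
  rw [hP i j]
  ring

lemma quad (P : Matrix (Fin m) (Fin m) (ZMod 2)) (hP : ∀ i j, P i j = P j i)
    (x y : Fin m → ZMod 2) :
    ((qform P (x + y) : ℕ) : ZMod 4)
      = ((qform P x : ℕ) : ZMod 4) + ((qform P y : ℕ) : ZMod 4)
      + ((bform P x y : ℕ) : ZMod 4) + ((bform P y x : ℕ) : ZMod 4) := by
  have key : ∑ p : Fin m × Fin m,
      ((((x p.1 + y p.1).val * (P p.1 p.2).val * ((x p.2 + y p.2).val) : ℕ) : ZMod 4)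
        - (((x p.1).val * (P p.1 p.2).val * (x p.2).val : ℕ) : ZMod 4)
        - (((y p.1).val * (P p.1 p.2).val * (y p.2).val : ℕ) : ZMod 4)
        - (((x p.1).val * (P p.1 p.2).val * (y p.2).val : ℕ) : ZMod 4)
        - (((y p.1).val * (P p.1 p.2).val * (x p.2).val : ℕ) : ZMod 4)) = 0 := by
    refine Finset.sum_involution (fun p _ => (p.2, p.1)) ?_ ?_ (fun p _ => Finset.mem_univ _)
      (fun p _ => rfl)
    · intro p _
      have hsw : P p.2 p.1 = P p.1 p.2 := hP p.2 p.1
      simp only [hsw]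
      exact quad_pointwise (P p.1 p.2) (x p.1) (y p.1) (x p.2) (y p.2)
    · intro p _ hne heq
      apply hne
      have h12 : p.2 = p.1 := congrArg Prod.fst heq
      rw [h12]
      exact quad_diag (P p.1 p.1) (x p.1) (y p.1)
  rw [Finset.sum_sub_distrib, Finset.sum_sub_distrib, Finset.sum_sub_distrib,
    Finset.sum_sub_distrib] at key
  have e : ∀ f : Fin m → Fin m → ℕ,
      (∑ p : Fin m × Fin m, ((f p.1 p.2 : ℕ) : ZMod 4)) = ((∑ i, ∑ j, f i j : ℕ) : ZMod 4) := by
    intro f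
    rw [← Finset.univ_product_univ, Finset.sum_product]
    push_cast
    rfl
  rw [e (fun i j => (x i + y i).val * (P i j).val * ((x j + y j).val)),
      e (fun i j => (x i).val * (P i j).val * (x j).val),
      e (fun i j => (y i).val * (P i j).val * (y j).val),
      e (fun i j => (x i).val * (P i j).val * (y j).val),
      e (fun i j => (y i).val * (P i j).val * (x j).val)] at key
  show ((∑ i, ∑ j, ((x + y) i).val * (P i j).val * ((x + y) j).val : ℕ) : ZMod 4) = _
  simp only [Pi.add_apply]
  unfold qform bform
  linear_combination key

lemma lin (w x y : Fin m → ZMod 2) :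
    2 * ((lform w (x + y) : ℕ) : ZMod 4)
      = 2 * ((lform w x : ℕ) : ZMod 4) + 2 * ((lform w y : ℕ) : ZMod 4) := by
  unfold lform
  simp only [Pi.add_apply]
  rw [Nat.cast_sum, Nat.cast_sum, Nat.cast_sum, Finset.mul_sum, Finset.mul_sum, Finset.mul_sum,
    ← Finset.sum_add_distrib]
  exact Finset.sum_congr rfl fun i _ => lin_pointwise (w i) (x i) (y i)

lemma bform_mod_two (M : Matrix (Fin m) (Fin m) (ZMod 2)) (x y : Fin m → ZMod 2) :
    ((bform M x y : ℕ) : ZMod 2) = x ᵥ* M ⬝ᵥ y := by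
  unfold bform
  push_cast
  simp only [ZMod.natCast_val, ZMod.cast_id]
  rw [dotProduct, Finset.sum_comm]
  refine Finset.sum_congr rfl fun i _ => ?_
  rw [Matrix.vecMul, dotProduct, Finset.sum_mul]

/-- Bilinear reduction: `2·b₁ − 2·b₂ = 2·((x ᵥ* (P₁ − P₂)) ⬝ᵥ y).val` in `ZMod 4`. -/
lemma bform_reduce (P1 P2 : Matrix (Fin m) (Fin m) (ZMod 2)) (x y : Fin m → ZMod 2) :
    2 * ((bform P1 x y : ℕ) : ZMod 4) - 2 * ((bform P2 x y : ℕ) : ZMod 4)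
      = 2 * (((x ᵥ* (P1 - P2) ⬝ᵥ y).val : ℕ) : ZMod 4) := by
  rw [two_mul_natCast (bform P1 x y), two_mul_natCast (bform P2 x y), sub_two_mul_val,
    bform_mod_two, bform_mod_two, Matrix.vecMul_sub, sub_dotProduct]

def Ffun (P1 P2 : Matrix (Fin m) (Fin m) (ZMod 2)) (w1 w2 : Fin m → ZMod 2)
    (x : Fin m → ZMod 2) : ZMod 4 :=
  ((qform P1 x : ℕ) : ZMod 4) - ((qform P2 x : ℕ) : ZMod 4)
    + 2 * ((lform w1 x : ℕ) : ZMod 4) - 2 * ((lform w2 x : ℕ) : ZMod 4)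

lemma step (P1 P2 : Matrix (Fin m) (Fin m) (ZMod 2))
    (h1 : ∀ i j, P1 i j = P1 j i) (h2 : ∀ i j, P2 i j = P2 j i)
    (w1 w2 : Fin m → ZMod 2) (u y : Fin m → ZMod 2) :
    Ffun P1 P2 w1 w2 (u + y) - Ffun P1 P2 w1 w2 y
      = Ffun P1 P2 w1 w2 u + 2 * (((u ᵥ* (P1 - P2) ⬝ᵥ y).val : ℕ) : ZMod 4) := by
  have e1 := quad P1 h1 u y
  have e2 := quad P2 h2 u y
  have el1 := lin w1 u y
  have el2 := lin w2 u y
  have hb1 : ((bform P1 y u : ℕ) : ZMod 4) = ((bform P1 u y : ℕ) : ZMod 4) := by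
    rw [bil_symm P1 h1 u y]
  have hb2 : ((bform P2 y u : ℕ) : ZMod 4) = ((bform P2 u y : ℕ) : ZMod 4) := by
    rw [bil_symm P2 h2 u y]
  have hred := bform_reduce P1 P2 u y
  unfold Ffun
  rw [e1, e2, el1, el2, hb1, hb2]
  linear_combination hred

lemma ffun_zero (P1 P2 : Matrix (Fin m) (Fin m) (ZMod 2)) (w1 w2 : Fin m → ZMod 2) :
    Ffun P1 P2 w1 w2 0 = 0 := by
  unfold Ffun qform lform
  simp

lemma sum_neg_one_pow (w : Fin m → ZMod 2) (hw : w ≠ 0) :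
    ∑ y : Fin m → ZMod 2, ((-1 : ℤ)) ^ (w ⬝ᵥ y).val = 0 := by
  obtain ⟨i, hi⟩ : ∃ i, w i ≠ 0 := by
    by_contra h; push_neg at h; exact hw (funext h)
  have hwi : w i = 1 := (show ∀ a : ZMod 2, a ≠ 0 → a = 1 by decide) (w i) hi
  set e : Fin m → ZMod 2 := Pi.single i 1 with he
  have key : ∀ y, ((-1:ℤ)) ^ (w ⬝ᵥ (y + e)).val = -((-1:ℤ)) ^ (w ⬝ᵥ y).val := by
    intro y
    have h1 : w ⬝ᵥ (y + e) = w ⬝ᵥ y + 1 := by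
      rw [dotProduct_add]
      congr 1
      simp [he, dotProduct, Pi.single_apply, hwi]
    rw [h1]
    exact (show ∀ a : ZMod 2, ((-1:ℤ)) ^ ((a + 1 : ZMod 2)).val = -((-1:ℤ)) ^ a.val by decide) _
  have h2 : ∑ y : Fin m → ZMod 2, ((-1:ℤ)) ^ (w ⬝ᵥ (y + e)).val
      = ∑ y : Fin m → ZMod 2, ((-1:ℤ)) ^ (w ⬝ᵥ y).val :=
    Fintype.sum_equiv (Equiv.addRight e) _ _ (fun y => rfl)
  have h3 : ∑ y : Fin m → ZMod 2, ((-1:ℤ)) ^ (w ⬝ᵥ (y + e)).val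
      = -∑ y : Fin m → ZMod 2, ((-1:ℤ)) ^ (w ⬝ᵥ y).val := by
    rw [← Finset.sum_neg_distrib]
    exact Finset.sum_congr rfl fun y _ => key y
  have := h2.symm.trans h3
  linarith

end KerdockAux

open KerdockAux

/-- For `m` odd and distinct Kerdock matrices `P₁ = A_{z₁}W ≠ P₂ = A_{z₂}W`,
writing `n_j` for the number of coordinates where the difference of the two
`Z₄`-valued Kerdock codewords equals `j`, one has
`(n₀ - n₂)² = (n₁ - n₃)² = 2^{m-1}`. -/
theorem kerdock_codeword_difference_counts
    (m : ℕ) (hm : Odd m) (F : Type) [Field F] [Algebra (ZMod 2) F]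
    (α : F) (bas : Module.Basis (Fin m) (ZMod 2) F)
    (hbas : ∀ i : Fin m, bas i = α ^ (i : ℕ))
    (hα : ∀ x : F, x ≠ 0 → ∃ k : ℕ, x = α ^ k)
    (W : Matrix (Fin m) (Fin m) (ZMod 2))
    (hW : ∀ i j, W i j = Algebra.trace (ZMod 2) F (α ^ (i : ℕ) * α ^ (j : ℕ)))
    (A : F → Matrix (Fin m) (Fin m) (ZMod 2))
    (hA : ∀ (w : F) (v : Fin m → ZMod 2),
      (∑ i, Matrix.vecMul v (A w) i • α ^ (i : ℕ)) = (∑ i, v i • α ^ (i : ℕ)) * w)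
    (z1 z2 : F) (hz : z1 ≠ z2)
    (w1 w2 : Fin m → ZMod 2) (κ1 κ2 : ZMod 4)
    (c1 c2 : (Fin m → ZMod 2) → ZMod 4)
    (hc1 : c1 = fun x =>
      (((∑ i, ∑ j, (x i).val * ((A z1 * W) i j).val * (x j).val) +
          2 * ∑ i, (w1 i).val * (x i).val : ℕ) : ZMod 4) + κ1)
    (hc2 : c2 = fun x =>
      (((∑ i, ∑ j, (x i).val * ((A z2 * W) i j).val * (x j).val) +
          2 * ∑ i, (w2 i).val * (x i).val : ℕ) : ZMod 4) + κ2)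
    (n : ZMod 4 → ℕ)
    (hn : ∀ j, n j = Nat.card {x : Fin m → ZMod 2 // c1 x - c2 x = j}) :
    ((n 0 : ℤ) - (n 2 : ℤ)) ^ 2 = 2 ^ (m - 1) ∧
      ((n 1 : ℤ) - (n 3 : ℤ)) ^ 2 = 2 ^ (m - 1) := by
  classical
  haveI : Module.Finite (ZMod 2) F := Module.Finite.of_basis bas
  -- entries of the Kerdock matrices are traces
  have hentry : ∀ (z : F) (i j : Fin m), (A z * W) i j
      = Algebra.trace (ZMod 2) F (α ^ (i : ℕ) * z * α ^ (j : ℕ)) := by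
    intro z i j
    have hrow : ∀ k, Matrix.vecMul (Pi.single i 1) (A z) k = A z i k := by
      intro k
      simp [Matrix.vecMul, dotProduct, Pi.single_apply]
    have hz' : (∑ k, A z i k • α ^ (k : ℕ)) = α ^ (i : ℕ) * z := by
      have h := hA z (Pi.single i 1)
      simp only [hrow] at h
      rw [h]
      congr 1
      simp [Pi.single_apply]
    rw [Matrix.mul_apply]
    calc ∑ k, A z i k * W k j
        = ∑ k, A z i k • Algebra.trace (ZMod 2) F (α ^ (k : ℕ) * α ^ (j : ℕ)) := by
          refine Finset.sum_congr rfl fun k _ => ?_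
          rw [hW k j, smul_eq_mul]
      _ = Algebra.trace (ZMod 2) F (∑ k, A z i k • (α ^ (k : ℕ) * α ^ (j : ℕ))) := by
          rw [map_sum]
          exact Finset.sum_congr rfl fun k _ => (_root_.map_smul (Algebra.trace (ZMod 2) F) _ _).symm
      _ = Algebra.trace (ZMod 2) F ((∑ k, A z i k • α ^ (k : ℕ)) * α ^ (j : ℕ)) := by
          rw [Finset.sum_mul]
          congr 1
          exact Finset.sum_congr rfl fun k _ => (smul_mul_assoc _ _ _).symm
      _ = Algebra.trace (ZMod 2) F (α ^ (i : ℕ) * z * α ^ (j : ℕ)) := by rw [hz']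
  have hsymm : ∀ z : F, ∀ i j, (A z * W) i j = (A z * W) j i := by
    intro z i j
    rw [hentry, hentry]
    congr 1
    ring
  set P : Matrix (Fin m) (Fin m) (ZMod 2) := A z1 * W - A z2 * W with hPdef
  have hPentry : ∀ i j, P i j
      = Algebra.trace (ZMod 2) F (α ^ (i : ℕ) * (z1 - z2) * α ^ (j : ℕ)) := by
    intro i j
    rw [hPdef, Matrix.sub_apply, hentry, hentry, ← map_sub]
    congr 1
    ring
  -- kernel of P is trivial
  have hker : ∀ u : Fin m → ZMod 2, u ᵥ* P = 0 → u = 0 := by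
    intro u hu
    set a : F := ∑ i, u i • α ^ (i : ℕ) with ha
    have haz : a * (z1 - z2) = 0 := by
      apply (traceForm_nondegenerate (ZMod 2) F).1
      intro c
      rw [Algebra.traceForm_apply]
      have hc : c = ∑ j, bas.repr c j • α ^ (j : ℕ) := by
        conv_lhs => rw [← bas.sum_repr c]
        exact Finset.sum_congr rfl fun j _ => by rw [hbas j]
      rw [hc, Finset.mul_sum, map_sum]
      refine Finset.sum_eq_zero fun j _ => ?_
      rw [mul_smul_comm, _root_.map_smul (Algebra.trace (ZMod 2) F)]
      have hj : Algebra.trace (ZMod 2) F (a * (z1 - z2) * α ^ (j : ℕ)) = 0 := by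
        have hcol : ∑ i, u i * P i j = 0 := by
          have := congrFun hu j
          simpa [Matrix.vecMul, dotProduct] using this
        calc Algebra.trace (ZMod 2) F (a * (z1 - z2) * α ^ (j : ℕ))
            = ∑ i, u i * P i j := by
              rw [ha, Finset.sum_mul, Finset.sum_mul, map_sum]
              refine Finset.sum_congr rfl fun i _ => ?_
              rw [smul_mul_assoc, smul_mul_assoc, _root_.map_smul (Algebra.trace (ZMod 2) F), hPentry i j, smul_eq_mul]
          _ = 0 := hcol
      rw [hj, smul_zero]
    have ha0 : a = 0 := by
      rcases mul_eq_zero.mp haz with h | h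
      · exact h
      · exact absurd (sub_eq_zero.mp h) hz
    have hsum : ∑ i, u i • bas i = 0 := by
      rw [show (∑ i, u i • bas i) = a by
        rw [ha]; exact Finset.sum_congr rfl fun i _ => by rw [hbas i]]
      exact ha0
    have hli := Fintype.linearIndependent_iff.mp bas.linearIndependent u hsum
    funext i
    exact hli i
  -- the difference of codewords
  set D : (Fin m → ZMod 2) → ZMod 4 := fun x => c1 x - c2 x with hD
  have hDval : ∀ x, D x = Ffun (A z1 * W) (A z2 * W) w1 w2 x + (κ1 - κ2) := by
    intro x
    rw [hD]
    simp only [hc1, hc2]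
    unfold Ffun qform lform
    simp only [Nat.cast_add, Nat.cast_mul, Nat.cast_ofNat]
    ring
  have hDstep : ∀ u y, D (u + y) - D y
      = Ffun (A z1 * W) (A z2 * W) w1 w2 u + 2 * (((u ᵥ* P ⬝ᵥ y).val : ℕ) : ZMod 4) := by
    intro u y
    rw [hDval (u + y), hDval y]
    have := step (A z1 * W) (A z2 * W) (hsymm z1) (hsymm z2) w1 w2 u y
    rw [hPdef]
    linear_combination this
  -- the two character sums
  set Sre : ℤ := ∑ x : Fin m → ZMod 2, chR (D x) with hSre
  set Sim : ℤ := ∑ x : Fin m → ZMod 2, chI (D x) with hSim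
  have hcard : (Fintype.card (Fin m → ZMod 2)) = 2 ^ m := by
    rw [Fintype.card_fun, ZMod.card, Fintype.card_fin]
  -- main identity : Sre² + Sim² = 2^m
  have hmain : Sre ^ 2 + Sim ^ 2 = 2 ^ m := by
    have expand : Sre ^ 2 + Sim ^ 2
        = ∑ x : Fin m → ZMod 2, ∑ y : Fin m → ZMod 2, chR (D x - D y) := by
      rw [hSre, hSim, sq, sq, Fintype.sum_mul_sum, Fintype.sum_mul_sum,
        ← Finset.sum_add_distrib]
      refine Finset.sum_congr rfl fun x _ => ?_
      rw [← Finset.sum_add_distrib]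
      exact Finset.sum_congr rfl fun y _ => (chR_sub (D x) (D y)).symm
    rw [expand, Finset.sum_comm]
    have reindex : ∀ y : Fin m → ZMod 2,
        ∑ x : Fin m → ZMod 2, chR (D x - D y)
          = ∑ u : Fin m → ZMod 2, chR (D (u + y) - D y) :=
      fun y => (Fintype.sum_equiv (Equiv.addRight y)
        (fun u => chR (D (u + y) - D y)) (fun x => chR (D x - D y)) (fun u => rfl)).symm
    calc ∑ y : Fin m → ZMod 2, ∑ x : Fin m → ZMod 2, chR (D x - D y)
        = ∑ y : Fin m → ZMod 2, ∑ u : Fin m → ZMod 2,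
            chR (Ffun (A z1 * W) (A z2 * W) w1 w2 u) * (-1 : ℤ) ^ (u ᵥ* P ⬝ᵥ y).val := by
          refine Finset.sum_congr rfl fun y _ => ?_
          rw [reindex y]
          refine Finset.sum_congr rfl fun u _ => ?_
          rw [hDstep u y, chR_add_two]
      _ = ∑ u : Fin m → ZMod 2, chR (Ffun (A z1 * W) (A z2 * W) w1 w2 u)
            * ∑ y : Fin m → ZMod 2, (-1 : ℤ) ^ (u ᵥ* P ⬝ᵥ y).val := by
          rw [Finset.sum_comm]
          exact Finset.sum_congr rfl fun u _ => (Finset.mul_sum _ _ _).symm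
      _ = 2 ^ m := by
          rw [Finset.sum_eq_single (0 : Fin m → ZMod 2)]
          · rw [ffun_zero, show chR 0 = 1 from rfl, one_mul]
            have : ∀ y : Fin m → ZMod 2, ((0 : Fin m → ZMod 2) ᵥ* P ⬝ᵥ y).val = 0 := by
              intro y
              rw [Matrix.zero_vecMul, zero_dotProduct, ZMod.val_zero]
            calc ∑ y : Fin m → ZMod 2, (-1 : ℤ) ^ ((0 : Fin m → ZMod 2) ᵥ* P ⬝ᵥ y).val
                = ∑ _y : Fin m → ZMod 2, (1 : ℤ) := by
                  exact Finset.sum_congr rfl fun y _ => by rw [this y, pow_zero]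
              _ = 2 ^ m := by
                  rw [Finset.sum_const, Finset.card_univ, hcard, nsmul_eq_mul, mul_one]
                  push_cast
                  ring
          · intro u _ hu
            have hvm : u ᵥ* P ≠ 0 := fun h => hu (hker u h)
            rw [sum_neg_one_pow (u ᵥ* P) hvm, mul_zero]
          · intro h
            exact absurd (Finset.mem_univ 0) h
  -- fibre counting
  have hfib : ∀ χ : ZMod 4 → ℤ, ∑ x : Fin m → ZMod 2, χ (D x)
      = ∑ j : ZMod 4, ((Finset.univ.filter (fun x : Fin m → ZMod 2 => D x = j)).card : ℤ) * χ j := by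
    intro χ
    rw [← Finset.sum_fiberwise' Finset.univ D χ]
    exact Finset.sum_congr rfl fun j _ => by rw [Finset.sum_const, nsmul_eq_mul]
  have hcount : ∀ j : ZMod 4,
      ((Finset.univ.filter (fun x : Fin m → ZMod 2 => D x = j)).card : ℤ) = (n j : ℤ) := by
    intro j
    rw [hn j, Nat.card_eq_fintype_card, Fintype.card_subtype]
  have hzmod4 : ∀ G : ZMod 4 → ℤ, (∑ j : ZMod 4, G j) = G 0 + G 1 + G 2 + G 3 := by
    intro G
    exact Fin.sum_univ_four G
  have hSre' : Sre = (n 0 : ℤ) - (n 2 : ℤ) := by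
    rw [hSre, hfib chR, hzmod4, hcount, hcount, hcount, hcount,
      show chR 0 = 1 from rfl, show chR 1 = 0 from rfl, show chR 2 = -1 from rfl,
      show chR 3 = 0 from rfl]
    ring
  have hSim' : Sim = (n 1 : ℤ) - (n 3 : ℤ) := by
    rw [hSim, hfib chI, hzmod4, hcount, hcount, hcount, hcount,
      show chI 0 = 0 from rfl, show chI 1 = 1 from rfl, show chI 2 = 0 from rfl,
      show chI 3 = -1 from rfl]
    ring
  obtain ⟨h1, h2⟩ := sq_add_sq_two_pow m hm Sre Sim hmain
  rw [hSre'] at h1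
  rw [hSim'] at h2
  exact ⟨h1, h2⟩
end

section
/- Let a,b,c,d ∈ F_{2^m} with ad + bc = 1 and c ≠ 0. Then the 2m×2m binary matrix F = [[A_d^2, A_b^2 W],[W^{−1} A_c^2, (A_a^2)^T]] is symplectic (F Ω F^T = Ω), and for every z ∈ F_{2^m} the row space of [I_m | A_z^2 W] F equals the row space of [I_m | A_{(az+b)/(cz+d)}^2 W] (interpreting z = ∞ appropriately when cz + d = 0). -/
open Matrix BigOperators

private lemma span_rows_mul_eq {R : Type*} [CommRing R] {n k : Type*} [Fintype n] [DecidableEq n]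
    (X : Matrix n n R) (hX : IsUnit X) (A : Matrix n k R) :
    Submodule.span R (Set.range fun i => (X * A) i) =
      Submodule.span R (Set.range fun i => A i) := by
  have key : ∀ (Y : Matrix n n R) (B : Matrix n k R),
      Submodule.span R (Set.range fun i => (Y * B) i) ≤
        Submodule.span R (Set.range fun i => B i) := by
    intro Y B
    rw [Submodule.span_le]
    rintro _ ⟨i, rfl⟩
    show (Y * B) i ∈ _
    have h : (Y * B) i = ∑ j, Y i j • B j := by
      ext l
      simp [Matrix.mul_apply, Finset.sum_apply]
    rw [h]
    exact Submodule.sum_mem _ fun j _ =>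
      Submodule.smul_mem _ _ (Submodule.subset_span ⟨j, rfl⟩)
  refine le_antisymm (key X A) ?_
  obtain ⟨u, rfl⟩ := hX
  have hA : A = (↑u⁻¹ : Matrix n n R) * ((↑u : Matrix n n R) * A) := by
    rw [← Matrix.mul_assoc, Units.inv_mul, Matrix.one_mul]
  conv_lhs => rw [hA]
  exact key _ _

/-- For `a,b,c,d ∈ F_{2^m}` with `ad + bc = 1`, `c ≠ 0`, the matrix
`F = [[A_d², A_b² W],[W⁻¹ A_c², (A_a²)ᵀ]]` is symplectic, and right
multiplication by `F` maps the row space of `[I | A_z² W]` to the row space of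
`[I | A_{(az+b)/(cz+d)}² W]` (to that of `[0 | I]` when `cz + d = 0`). -/
theorem kerdock_psl_action
    (m : ℕ) (hm : 0 < m) (F : Type) [Field F] [Algebra (ZMod 2) F]
    (α : F) (bas : Module.Basis (Fin m) (ZMod 2) F)
    (hbas : ∀ i : Fin m, bas i = α ^ (i : ℕ))
    (hα : ∀ x : F, x ≠ 0 → ∃ k : ℕ, x = α ^ k)
    (W : Matrix (Fin m) (Fin m) (ZMod 2))
    (hW : ∀ i j, W i j = Algebra.trace (ZMod 2) F (α ^ (i : ℕ) * α ^ (j : ℕ)))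
    (Amul : F → Matrix (Fin m) (Fin m) (ZMod 2))
    (hAmul : ∀ (w : F) (v : Fin m → ZMod 2),
      (∑ i, Matrix.vecMul v (Amul w) i • α ^ (i : ℕ)) = (∑ i, v i • α ^ (i : ℕ)) * w)
    (a b c d : F) (habcd : a * d + b * c = 1) (hc : c ≠ 0)
    (Fmat : Matrix (Fin m ⊕ Fin m) (Fin m ⊕ Fin m) (ZMod 2))
    (hFmat : Fmat = Matrix.fromBlocks ((Amul d) ^ 2) ((Amul b) ^ 2 * W)
      (W⁻¹ * (Amul c) ^ 2) (((Amul a) ^ 2)ᵀ))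
    (G : F → Matrix (Fin m) (Fin m ⊕ Fin m) (ZMod 2))
    (hG : ∀ z : F, G z = Matrix.fromCols 1 ((Amul z) ^ 2 * W)) :
    Fmat * Matrix.fromBlocks 0 1 1 0 * Fmatᵀ = Matrix.fromBlocks 0 1 1 0 ∧
    ∀ z : F,
      (c * z + d ≠ 0 →
        Submodule.span (ZMod 2) (Set.range fun i => (G z * Fmat) i) =
          Submodule.span (ZMod 2)
            (Set.range fun i => G ((a * z + b) / (c * z + d)) i)) ∧
      (c * z + d = 0 →
        Submodule.span (ZMod 2) (Set.range fun i => (G z * Fmat) i) =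
          Submodule.span (ZMod 2) (Set.range fun i =>
            (Matrix.fromCols (0 : Matrix (Fin m) (Fin m) (ZMod 2))
              (1 : Matrix (Fin m) (Fin m) (ZMod 2))) i)) := by
  classical
  haveI : FiniteDimensional (ZMod 2) F := Module.Finite.of_basis bas
  haveI : CharP F 2 := charP_of_injective_ringHom (algebraMap (ZMod 2) F).injective 2
  -- the coordinate equivalence
  have hφ : ∀ v : Fin m → ZMod 2, bas.equivFun.symm v = ∑ i, v i • α ^ (i : ℕ) := by
    intro v
    rw [Module.Basis.equivFun_symm_apply]
    exact Finset.sum_congr rfl fun i _ => by rw [hbas]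
  have hinj : Function.Injective (bas.equivFun.symm) := bas.equivFun.symm.injective
  have hrepr : ∀ (w : F) (v : Fin m → ZMod 2),
      bas.equivFun.symm (Matrix.vecMul v (Amul w)) = bas.equivFun.symm v * w := by
    intro w v
    rw [hφ, hφ]
    exact hAmul w v
  -- ring homomorphism properties of `Amul`
  have hmul : ∀ x y : F, Amul (x * y) = Amul x * Amul y := by
    intro x y
    ext i j
    have key : Matrix.vecMul (Pi.single i 1) (Amul (x * y)) =
        Matrix.vecMul (Pi.single i 1) (Amul x * Amul y) := by
      apply hinj
      rw [← Matrix.vecMul_vecMul, hrepr, hrepr, hrepr, mul_assoc]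
    have h0 := congrFun key j
    rwa [Matrix.single_one_vecMul, Matrix.single_one_vecMul] at h0
  have hone : Amul 1 = 1 := by
    ext i j
    have key : Matrix.vecMul (Pi.single i 1) (Amul 1) =
        Matrix.vecMul (Pi.single i 1) (1 : Matrix (Fin m) (Fin m) (ZMod 2)) := by
      apply hinj
      rw [hrepr, mul_one, Matrix.vecMul_one]
    have h0 := congrFun key j
    rwa [Matrix.single_one_vecMul, Matrix.single_one_vecMul] at h0
  have hadd : ∀ x y : F, Amul (x + y) = Amul x + Amul y := by
    intro x y
    ext i j
    have key : Matrix.vecMul (Pi.single i 1) (Amul (x + y)) =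
        Matrix.vecMul (Pi.single i 1) (Amul x + Amul y) := by
      apply hinj
      rw [Matrix.vecMul_add, map_add, hrepr, hrepr, hrepr, mul_add]
    have h0 := congrFun key j
    rwa [Matrix.single_one_vecMul, Matrix.single_one_vecMul] at h0
  have hzero : Amul 0 = 0 := by
    ext i j
    have key : Matrix.vecMul (Pi.single i 1) (Amul 0) =
        Matrix.vecMul (Pi.single i 1) (0 : Matrix (Fin m) (Fin m) (ZMod 2)) := by
      apply hinj
      rw [hrepr, mul_zero, Matrix.vecMul_zero, map_zero]
    have h0 := congrFun key j
    rwa [Matrix.single_one_vecMul, Matrix.single_one_vecMul] at h0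
  have hsq : ∀ x : F, Amul x ^ 2 = Amul (x ^ 2) := by
    intro x
    rw [sq, sq, hmul]
  have hunit : ∀ x : F, x ≠ 0 → IsUnit (Amul x) := by
    intro x hx
    refine ⟨⟨Amul x, Amul x⁻¹, ?_, ?_⟩, rfl⟩
    · rw [← hmul, mul_inv_cancel₀ hx, hone]
    · rw [← hmul, inv_mul_cancel₀ hx, hone]
  -- row formula
  have hrowf : ∀ (x : F) (i : Fin m), (∑ k, (Amul x) i k • α ^ (k : ℕ)) = α ^ (i : ℕ) * x := by
    intro x i
    have h0 := hAmul x (Pi.single i 1)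
    rw [Matrix.single_one_vecMul] at h0
    change ∑ k, (Amul x) i k • α ^ (k : ℕ) = _ at h0
    rw [h0]
    congr 1
    rw [Finset.sum_eq_single i]
    · simp
    · intro k _ hk
      simp [Pi.single_eq_of_ne hk]
    · intro h; exact absurd (Finset.mem_univ i) h
  -- trace formula for `Amul x * W`
  have htrW : ∀ (x : F) (i j : Fin m), (Amul x * W) i j =
      Algebra.trace (ZMod 2) F (α ^ (i : ℕ) * x * α ^ (j : ℕ)) := by
    intro x i j
    rw [Matrix.mul_apply]
    have h1 : ∀ k, (Amul x) i k * W k j =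
        Algebra.trace (ZMod 2) F ((Amul x) i k • (α ^ (k : ℕ) * α ^ (j : ℕ))) := by
      intro k
      rw [hW, _root_.map_smul, smul_eq_mul]
    rw [Finset.sum_congr rfl fun k _ => h1 k, ← map_sum]
    congr 1
    calc ∑ k, (Amul x) i k • (α ^ (k : ℕ) * α ^ (j : ℕ))
        = (∑ k, (Amul x) i k • α ^ (k : ℕ)) * α ^ (j : ℕ) := by
          rw [Finset.sum_mul]
          exact Finset.sum_congr rfl fun k _ => (smul_mul_assoc _ _ _).symm
      _ = α ^ (i : ℕ) * x * α ^ (j : ℕ) := by rw [hrowf]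
  have hWsymm : Wᵀ = W := by
    ext i j
    rw [Matrix.transpose_apply, hW, hW, mul_comm]
  have hsymmA : ∀ x : F, (Amul x * W)ᵀ = Amul x * W := by
    intro x
    ext i j
    rw [Matrix.transpose_apply, htrW, htrW]
    congr 1
    ring
  have hcomm : ∀ x : F, Amul x * W = W * (Amul x)ᵀ := by
    intro x
    conv_lhs => rw [← hsymmA x]
    rw [Matrix.transpose_mul, hWsymm]
  -- invertibility of W
  have hdet : IsUnit W.det := by
    have hWeq : W = LinearMap.BilinForm.toMatrix bas (Algebra.traceForm (ZMod 2) F) := by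
      ext i j
      rw [hW, BilinForm.toMatrix_apply, Algebra.traceForm_apply, hbas, hbas]
    have hnd := traceForm_nondegenerate (ZMod 2) F
    rw [LinearMap.BilinForm.nondegenerate_iff_det_ne_zero bas] at hnd
    rw [hWeq]
    exact isUnit_iff_ne_zero.mpr hnd
  have hWW : W * W⁻¹ = 1 := Matrix.mul_nonsing_inv W hdet
  have hWW' : W⁻¹ * W = 1 := Matrix.nonsing_inv_mul W hdet
  have hWunit : IsUnit W := (Matrix.isUnit_iff_isUnit_det W).mpr hdet
  have hWit : (W⁻¹)ᵀ = W⁻¹ := by rw [Matrix.transpose_nonsing_inv, hWsymm]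
  have hcomm' : ∀ x : F, W⁻¹ * Amul x = (Amul x)ᵀ * W⁻¹ := by
    intro x
    calc W⁻¹ * Amul x = W⁻¹ * Amul x * (W * W⁻¹) := by rw [hWW, mul_one]
      _ = W⁻¹ * (Amul x * W) * W⁻¹ := by rw [mul_assoc, mul_assoc, mul_assoc]
      _ = W⁻¹ * (W * (Amul x)ᵀ) * W⁻¹ := by rw [hcomm]
      _ = (W⁻¹ * W) * ((Amul x)ᵀ * W⁻¹) := by rw [mul_assoc, mul_assoc, mul_assoc]
      _ = (Amul x)ᵀ * W⁻¹ := by rw [hWW', one_mul]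
  have htwo : ∀ M : Matrix (Fin m) (Fin m) (ZMod 2), M + M = 0 := by
    intro M
    ext i j
    rw [Matrix.add_apply, Matrix.zero_apply, CharTwo.add_self_eq_zero]
  have h2F : (2 : F) = 0 := CharTwo.two_eq_zero
  have hsq1 : (a * d) ^ 2 + (b * c) ^ 2 = 1 := by
    rw [← CharTwo.add_sq, habcd, one_pow]
  subst hFmat
  constructor
  · -- symplectic
    simp only [hsq]
    rw [Matrix.fromBlocks_transpose, Matrix.fromBlocks_multiply, Matrix.fromBlocks_multiply]
    have e11 : (Amul (d ^ 2) * 0 + Amul (b ^ 2) * W * 1) * (Amul (d ^ 2))ᵀ +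
        (Amul (d ^ 2) * 1 + Amul (b ^ 2) * W * 0) * (Amul (b ^ 2) * W)ᵀ = 0 := by
      rw [Matrix.mul_zero, Matrix.mul_one, Matrix.mul_zero, Matrix.mul_one, zero_add, add_zero]
      rw [hsymmA, mul_assoc, ← hcomm, ← mul_assoc, ← mul_assoc, ← hmul, ← hmul,
        mul_comm (d ^ 2) (b ^ 2)]
      exact htwo _
    have e12 : (Amul (d ^ 2) * 0 + Amul (b ^ 2) * W * 1) * (W⁻¹ * Amul (c ^ 2))ᵀ +
        (Amul (d ^ 2) * 1 + Amul (b ^ 2) * W * 0) * (Amul (a ^ 2))ᵀᵀ = 1 := by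
      rw [Matrix.mul_zero, Matrix.mul_one, Matrix.mul_zero, Matrix.mul_one, zero_add, add_zero,
        Matrix.transpose_transpose, Matrix.transpose_mul, hWit]
      rw [mul_assoc (Amul (b ^ 2)) W, ← mul_assoc W, ← hcomm, mul_assoc (Amul (c ^ 2)) W,
        hWW, mul_one, ← hmul, ← hmul, ← hadd]
      rw [show b ^ 2 * c ^ 2 + d ^ 2 * a ^ 2 = 1 by linear_combination hsq1]
      exact hone
    have e21 : (W⁻¹ * Amul (c ^ 2) * 0 + (Amul (a ^ 2))ᵀ * 1) * (Amul (d ^ 2))ᵀ +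
        (W⁻¹ * Amul (c ^ 2) * 1 + (Amul (a ^ 2))ᵀ * 0) * (Amul (b ^ 2) * W)ᵀ = 1 := by
      rw [Matrix.mul_zero, Matrix.mul_one, Matrix.mul_zero, Matrix.mul_one, zero_add, add_zero,
        hsymmA, ← Matrix.transpose_mul, ← hmul]
      rw [mul_assoc W⁻¹ (Amul (c ^ 2)), ← mul_assoc (Amul (c ^ 2)), ← hmul, hcomm,
        ← mul_assoc W⁻¹ W, hWW', one_mul]
      rw [← Matrix.transpose_add, ← hadd]
      rw [show d ^ 2 * a ^ 2 + c ^ 2 * b ^ 2 = 1 by linear_combination hsq1]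
      rw [hone, Matrix.transpose_one]
    have e22 : (W⁻¹ * Amul (c ^ 2) * 0 + (Amul (a ^ 2))ᵀ * 1) * (W⁻¹ * Amul (c ^ 2))ᵀ +
        (W⁻¹ * Amul (c ^ 2) * 1 + (Amul (a ^ 2))ᵀ * 0) * (Amul (a ^ 2))ᵀᵀ = 0 := by
      rw [Matrix.mul_zero, Matrix.mul_one, Matrix.mul_zero, Matrix.mul_one, zero_add, add_zero,
        Matrix.transpose_transpose]
      have t3 : (Amul (a ^ 2))ᵀ * (W⁻¹ * Amul (c ^ 2))ᵀ = W⁻¹ * Amul (c ^ 2) * Amul (a ^ 2) := by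
        calc (Amul (a ^ 2))ᵀ * (W⁻¹ * Amul (c ^ 2))ᵀ
            = ((W⁻¹ * Amul (c ^ 2)) * Amul (a ^ 2))ᵀ := by rw [Matrix.transpose_mul (W⁻¹ * Amul (c ^ 2)) (Amul (a ^ 2))]
          _ = (W⁻¹ * Amul (c ^ 2 * a ^ 2))ᵀ := by rw [mul_assoc, hmul]
          _ = ((Amul (c ^ 2 * a ^ 2))ᵀ * W⁻¹)ᵀ := by rw [hcomm']
          _ = W⁻¹ᵀ * (Amul (c ^ 2 * a ^ 2))ᵀᵀ := by rw [Matrix.transpose_mul]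
          _ = W⁻¹ * Amul (c ^ 2 * a ^ 2) := by rw [hWit, Matrix.transpose_transpose]
          _ = W⁻¹ * Amul (c ^ 2) * Amul (a ^ 2) := by rw [hmul, mul_assoc]
      rw [t3]
      exact htwo _
    rw [e11, e12, e21, e22]
  · -- the action on row spaces
    have hGF : ∀ z : F, G z * Matrix.fromBlocks ((Amul d) ^ 2) ((Amul b) ^ 2 * W)
        (W⁻¹ * (Amul c) ^ 2) (((Amul a) ^ 2)ᵀ) =
        Matrix.fromCols (Amul ((c * z + d) ^ 2)) (Amul ((a * z + b) ^ 2) * W) := by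
      intro z
      rw [hG z, Matrix.fromCols_mul_fromBlocks]
      simp only [hsq, Matrix.one_mul]
      have hb1 : Amul (d ^ 2) + Amul (z ^ 2) * W * (W⁻¹ * Amul (c ^ 2)) =
          Amul ((c * z + d) ^ 2) := by
        rw [mul_assoc (Amul (z ^ 2)) W, ← mul_assoc W W⁻¹, hWW, one_mul, ← hmul, ← hadd,
          show d ^ 2 + z ^ 2 * c ^ 2 = (c * z + d) ^ 2 from by rw [CharTwo.add_sq]; ring]
      have hb2 : Amul (b ^ 2) * W + Amul (z ^ 2) * W * (Amul (a ^ 2))ᵀ =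
          Amul ((a * z + b) ^ 2) * W := by
        rw [mul_assoc (Amul (z ^ 2)) W, ← hcomm, ← mul_assoc, ← hmul, ← Matrix.add_mul, ← hadd,
          show b ^ 2 + z ^ 2 * a ^ 2 = (a * z + b) ^ 2 from by rw [CharTwo.add_sq]; ring]
      rw [hb1, hb2]
    intro z
    constructor
    · intro h
      have hu : IsUnit (Amul ((c * z + d) ^ 2)) := hunit _ (pow_ne_zero 2 h)
      have he : Amul ((c * z + d) ^ 2) * G ((a * z + b) / (c * z + d)) =
          G z * Matrix.fromBlocks ((Amul d) ^ 2) ((Amul b) ^ 2 * W)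
            (W⁻¹ * (Amul c) ^ 2) (((Amul a) ^ 2)ᵀ) := by
        rw [hG ((a * z + b) / (c * z + d)), Matrix.mul_fromCols, mul_one, hsq,
          ← mul_assoc, ← hmul, hGF z]
        have harg : (c * z + d) ^ 2 * ((a * z + b) / (c * z + d)) ^ 2 = (a * z + b) ^ 2 := by
          field_simp
        rw [harg]
      rw [← he]
      exact span_rows_mul_eq _ hu _
    · intro h
      have hz : a * z + b ≠ 0 := by
        intro h0
        have key : (1 : F) = c * (a * z + b) + a * (c * z + d) := by
          linear_combination (-1 : F) * habcd + (-(a * c * z)) * h2F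
        rw [h0, h, mul_zero, mul_zero, add_zero] at key
        exact one_ne_zero key
      have hu : IsUnit (Amul ((a * z + b) ^ 2) * W) :=
        (hunit _ (pow_ne_zero 2 hz)).mul hWunit
      have he : (Amul ((a * z + b) ^ 2) * W) *
          Matrix.fromCols (0 : Matrix (Fin m) (Fin m) (ZMod 2))
            (1 : Matrix (Fin m) (Fin m) (ZMod 2)) =
          G z * Matrix.fromBlocks ((Amul d) ^ 2) ((Amul b) ^ 2 * W)
            (W⁻¹ * (Amul c) ^ 2) (((Amul a) ^ 2)ᵀ) := by
        rw [Matrix.mul_fromCols, Matrix.mul_zero, Matrix.mul_one, hGF z, h,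
          zero_pow (by norm_num : (2 : ℕ) ≠ 0), hzero]
      rw [← he]
      exact span_rows_mul_eq _ hu _
end
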